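/- Let f ∈ K[X] be a polynomial of degree d ≥ 2 with good reduction. Then for every q ∈ K, the limit as n → ∞ of (1/dⁿ)·Σ log|ξ − q|, where the sum ranges over all roots ξ ≠ q of f⁽ⁿ⁾(X) − X counted with multiplicity (f⁽ⁿ⁾ the n-th iterate of f), exists and equals log⁺|q| = max{0, log|q|}. -/

import Mathlib

open Polynomial Filter

/-- The `n`-th compositional iterate of a polynomial, with `f⁽⁰⁾ = X`. -/
noncomputable def polyIter {K : Type*} [CommSemiring K] (f : K[X]) : ℕ → K[X]
  | 0 => X
  | n + 1 => f.comp (polyIter f n)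

namespace Stmt0
set_option linter.unusedSectionVars false
set_option maxHeartbeats 1000000

variable {K : Type*} [NormedField K] [IsUltrametricDist K]

/-- All coefficients have norm at most 1. -/
def IntC {K : Type*} [NormedField K] (g : K[X]) : Prop := ∀ i, ‖g.coeff i‖ ≤ 1

lemma norm_eq_of_sub_lt {a b : K} (h : ‖a - b‖ < ‖b‖) : ‖a‖ = ‖b‖ := by
  have h1 : ‖a‖ ≤ ‖b‖ := by
    calc ‖a‖ = ‖(a - b) + b‖ := by ring_nf
    _ ≤ max ‖a - b‖ ‖b‖ := IsUltrametricDist.norm_add_le_max _ _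
    _ ≤ ‖b‖ := by rw [max_le_iff]; exact ⟨h.le, le_rfl⟩
  refine le_antisymm h1 ?_
  by_contra hc
  push_neg at hc
  have h2 : ‖b‖ ≤ max ‖a‖ ‖a - b‖ := by
    have h3 := IsUltrametricDist.norm_add_le_max a (b - a)
    have h4 : a + (b - a) = b := by ring
    rw [h4] at h3
    have h5 : ‖b - a‖ = ‖a - b‖ := by rw [← neg_sub]; exact norm_neg _
    rw [h5] at h3; exact h3
  have h6 := max_lt hc (lt_of_lt_of_le h (le_refl _))
  exact absurd (lt_of_le_of_lt h2 h6) (lt_irrefl _)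

lemma norm_sub_le_max (a b : K) : ‖a - b‖ ≤ max ‖a‖ ‖b‖ := by
  have := IsUltrametricDist.norm_add_le_max a (-b)
  simpa [sub_eq_add_neg] using this

lemma intC_eval_le {g : K[X]} (hg : IntC g) {x : K} (hx : ‖x‖ ≤ 1) : ‖g.eval x‖ ≤ 1 := by
  rw [Polynomial.eval_eq_sum_range' (Nat.lt_succ_self g.natDegree)]
  refine IsUltrametricDist.norm_sum_le_of_forall_le_of_nonneg zero_le_one ?_
  intro i _
  calc ‖g.coeff i * x ^ i‖ = ‖g.coeff i‖ * ‖x‖ ^ i := by rw [norm_mul, norm_pow]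
  _ ≤ 1 * 1 := by
      exact mul_le_mul (hg i) (pow_le_one₀ (norm_nonneg x) hx) (by positivity) zero_le_one
  _ = 1 := one_mul 1

lemma intC_mul {g h : K[X]} (hg : IntC g) (hh : IntC h) : IntC (g * h) := by
  intro i
  rw [Polynomial.coeff_mul]
  refine IsUltrametricDist.norm_sum_le_of_forall_le_of_nonneg zero_le_one ?_
  rintro ⟨a, b⟩ _
  calc ‖g.coeff a * h.coeff b‖ = ‖g.coeff a‖ * ‖h.coeff b‖ := norm_mul _ _
  _ ≤ 1 * 1 := mul_le_mul (hg a) (hh b) (norm_nonneg _) zero_le_one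
  _ = 1 := one_mul 1

lemma intC_X : IntC (X : K[X]) := by
  intro i
  rcases eq_or_ne i 1 with rfl | h
  · simp
  · simp [Polynomial.coeff_X, Ne.symm h]

lemma intC_C {c : K} (hc : ‖c‖ ≤ 1) : IntC (C c) := by
  intro i
  rcases eq_or_ne i 0 with rfl | h
  · simpa using hc
  · simp [Polynomial.coeff_C, h]

lemma intC_one : IntC (1 : K[X]) := intC_C (by simp)

lemma intC_pow {g : K[X]} (hg : IntC g) (n : ℕ) : IntC (g ^ n) := by
  induction n with
  | zero => simpa using intC_one
  | succ n ih => rw [pow_succ]; exact intC_mul ih hg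

lemma intC_comp {g h : K[X]} (hg : IntC g) (hh : IntC h) : IntC (g.comp h) := by
  intro i
  rw [Polynomial.comp_eq_sum_left]
  rw [Polynomial.sum_over_range (p := g) (f := fun e a => C a * h ^ e) (fun n => by simp),
    Polynomial.finset_sum_coeff]
  refine IsUltrametricDist.norm_sum_le_of_forall_le_of_nonneg zero_le_one ?_
  intro j _
  rw [Polynomial.coeff_C_mul, norm_mul]
  calc ‖g.coeff j‖ * ‖(h ^ j).coeff i‖ ≤ 1 * 1 :=
    mul_le_mul (hg j) (intC_pow hh j i) (norm_nonneg _) zero_le_one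
  _ = 1 := one_mul 1

lemma intC_add {g h : K[X]} (hg : IntC g) (hh : IntC h) : IntC (g + h) := by
  intro i
  rw [Polynomial.coeff_add]
  calc ‖g.coeff i + h.coeff i‖ ≤ max ‖g.coeff i‖ ‖h.coeff i‖ :=
    IsUltrametricDist.norm_add_le_max _ _
  _ ≤ 1 := max_le (hg i) (hh i)

lemma intC_sub {g h : K[X]} (hg : IntC g) (hh : IntC h) : IntC (g - h) := by
  intro i
  rw [Polynomial.coeff_sub]
  calc ‖g.coeff i - h.coeff i‖ ≤ max ‖g.coeff i‖ ‖h.coeff i‖ := norm_sub_le_max _ _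
  _ ≤ 1 := max_le (hg i) (hh i)

lemma intC_taylor {g : K[X]} (hg : IntC g) {q : K} (hq : ‖q‖ ≤ 1) : IntC (taylor q g) := by
  rw [Polynomial.taylor_apply]
  exact intC_comp hg (intC_add intC_X (intC_C hq))

lemma intC_derivative {g : K[X]} (hg : IntC g) : IntC (derivative g) := by
  intro i
  rw [Polynomial.coeff_derivative, norm_mul]
  have h1 : ‖((i : K) + 1)‖ ≤ 1 := by
    have h2 : ((i : K) + 1) = ((i + 1 : ℕ) : K) := by push_cast; ring
    rw [h2]
    exact IsUltrametricDist.norm_natCast_le_one K _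
  have := mul_le_mul (hg (i+1)) h1 (norm_nonneg _) zero_le_one
  simpa using this


lemma norm_le_one_of_ball {q x : K} (hq : ‖q‖ ≤ 1) (hx : ‖x - q‖ ≤ 1) : ‖x‖ ≤ 1 := by
  have h1 : x = (x - q) + q := by ring
  rw [h1]
  exact le_trans (IsUltrametricDist.norm_add_le_max _ _) (max_le hx hq)

/-- expansion of `g.eval x` around `y`. -/
lemma eval_taylor_expand (g : K[X]) (x y : K) :
    g.eval x = ∑ i ∈ Finset.range ((taylor y g).natDegree + 2),
      (taylor y g).coeff i * (x - y) ^ i := by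
  have h1 : (taylor y g).eval (x - y) = g.eval x := by
    rw [Polynomial.taylor_eval]; congr 1; ring
  rw [← h1]
  exact Polynomial.eval_eq_sum_range' (by omega) _

/-- first order estimate (Lipschitz). -/
lemma lipschitz_eval {g : K[X]} (hg : IntC g) {x y : K} (hx : ‖x‖ ≤ 1) (hy : ‖y‖ ≤ 1) :
    ‖g.eval x - g.eval y‖ ≤ ‖x - y‖ := by
  have hT : IntC (taylor y g) := intC_taylor hg hy
  have hz : ‖x - y‖ ≤ 1 := le_trans (norm_sub_le_max x y) (max_le hx hy)
  rw [eval_taylor_expand g x y, Finset.sum_range_succ']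
  have h0 : (taylor y g).coeff 0 * (x - y) ^ 0 = g.eval y := by
    simp [Polynomial.taylor_coeff_zero]
  rw [h0, add_sub_cancel_right]
  refine IsUltrametricDist.norm_sum_le_of_forall_le_of_nonneg (norm_nonneg _) ?_
  intro i _
  rw [norm_mul, norm_pow]
  calc ‖(taylor y g).coeff (i+1)‖ * ‖x - y‖ ^ (i+1) ≤ 1 * ‖x - y‖ ^ (i+1) :=
    mul_le_mul_of_nonneg_right (hT _) (by positivity)
  _ = ‖x - y‖ ^ i * ‖x - y‖ := by ring
  _ ≤ 1 * ‖x - y‖ :=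
    mul_le_mul_of_nonneg_right (pow_le_one₀ (norm_nonneg _) hz) (norm_nonneg _)
  _ = ‖x - y‖ := one_mul _

/-- second order estimate. -/
lemma taylor_second_order {g : K[X]} (hg : IntC g) {x y : K} (hx : ‖x‖ ≤ 1) (hy : ‖y‖ ≤ 1) :
    ‖g.eval x - g.eval y - (derivative g).eval y * (x - y)‖ ≤ ‖x - y‖ ^ 2 := by
  have hT : IntC (taylor y g) := intC_taylor hg hy
  have hz : ‖x - y‖ ≤ 1 := le_trans (norm_sub_le_max x y) (max_le hx hy)
  have e0 : (taylor y g).coeff 0 * (x - y) ^ 0 = g.eval y := by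
    simp [Polynomial.taylor_coeff_zero]
  have e1 : (taylor y g).coeff (0+1) * (x - y) ^ (0+1) = (derivative g).eval y * (x - y) := by
    simp [Polynomial.taylor_coeff_one]
  rw [eval_taylor_expand g x y, Finset.sum_range_succ', Finset.sum_range_succ', e0, e1]
  have harr : ∀ S D E : K, S + D + E - E - D = S := fun S D E => by ring
  rw [harr]
  refine IsUltrametricDist.norm_sum_le_of_forall_le_of_nonneg (by positivity) ?_
  intro i _
  rw [norm_mul, norm_pow]
  calc ‖(taylor y g).coeff (i+1+1)‖ * ‖x - y‖ ^ (i+1+1) ≤ 1 * ‖x - y‖ ^ (i+1+1) :=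
    mul_le_mul_of_nonneg_right (hT _) (by positivity)
  _ = ‖x - y‖ ^ i * ‖x - y‖ ^ 2 := by ring
  _ ≤ 1 * ‖x - y‖ ^ 2 :=
    mul_le_mul_of_nonneg_right (pow_le_one₀ (norm_nonneg _) hz) (by positivity)
  _ = ‖x - y‖ ^ 2 := one_mul _

/-- isometry estimate. -/
lemma eval_isometry {g : K[X]} (hg : IntC g) {q x y : K} (hq : ‖q‖ ≤ 1)
    (hd : ‖(derivative g).eval q‖ = 1) (hx : ‖x - q‖ < 1) (hy : ‖y - q‖ < 1) :
    ‖g.eval x - g.eval y‖ = ‖x - y‖ := by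
  rcases eq_or_ne x y with rfl | hxy
  · simp
  have hx1 : ‖x‖ ≤ 1 := norm_le_one_of_ball hq hx.le
  have hy1 : ‖y‖ ≤ 1 := norm_le_one_of_ball hq hy.le
  have hdy : ‖(derivative g).eval y‖ = 1 := by
    have h3 := lipschitz_eval (intC_derivative hg) hy1 hq
    have hlt : ‖(derivative g).eval y - (derivative g).eval q‖ < ‖(derivative g).eval q‖ := by
      rw [hd]; exact lt_of_le_of_lt h3 hy
    exact (norm_eq_of_sub_lt hlt).trans hd
  have h2 := taylor_second_order hg hx1 hy1
  have hzlt1 : ‖x - y‖ < 1 := by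
    have h4 : x - y = (x - q) - (y - q) := by ring
    rw [h4]
    exact lt_of_le_of_lt (norm_sub_le_max _ _) (max_lt hx hy)
  have hzpos : 0 < ‖x - y‖ := norm_pos_iff.mpr (sub_ne_zero.mpr hxy)
  have hzz : ‖x - y‖ ^ 2 < ‖(derivative g).eval y * (x - y)‖ := by
    rw [norm_mul, hdy, one_mul, pow_two]
    exact mul_lt_of_lt_one_left hzpos hzlt1
  have h5 := norm_eq_of_sub_lt (a := g.eval x - g.eval y)
    (b := (derivative g).eval y * (x - y)) (lt_of_le_of_lt h2 hzz)
  rw [h5, norm_mul, hdy, one_mul]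

lemma natcast_norm_one {p : ℕ} (hp : p.Prime) (hpK : ‖(p : K)‖ = (p : ℝ)⁻¹)
    {u : ℕ} (hu : ¬ p ∣ u) : ‖(u : K)‖ = 1 := by
  have hco : Nat.Coprime p u := (Nat.Prime.coprime_iff_not_dvd hp).mpr hu
  have hic : IsCoprime (p : ℤ) (u : ℤ) := Nat.isCoprime_iff_coprime.mpr hco
  obtain ⟨a, b, hab⟩ := hic
  have hcast : (a : K) * (p : K) + (b : K) * (u : K) = 1 := by
    have := congrArg (fun z : ℤ => (z : K)) hab
    push_cast at this
    simpa using this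
  refine le_antisymm (IsUltrametricDist.norm_natCast_le_one K u) ?_
  by_contra hlt
  push_neg at hlt
  have hple : ‖(p : K)‖ < 1 := by
    rw [hpK]
    have h2 : (1:ℝ) < (p:ℝ) := by exact_mod_cast hp.one_lt
    rw [inv_lt_one_iff₀]; right; exact h2
  have h6 : ‖(a : K) * (p : K) + (b : K) * (u : K)‖ < 1 := by
    refine lt_of_le_of_lt (IsUltrametricDist.norm_add_le_max _ _) (max_lt ?_ ?_)
    · rw [norm_mul]
      calc ‖(a:K)‖ * ‖(p:K)‖ ≤ 1 * ‖(p:K)‖ :=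
        mul_le_mul_of_nonneg_right (IsUltrametricDist.norm_intCast_le_one K a) (norm_nonneg _)
      _ = ‖(p:K)‖ := one_mul _
      _ < 1 := hple
    · rw [norm_mul]
      calc ‖(b:K)‖ * ‖(u:K)‖ ≤ 1 * ‖(u:K)‖ :=
        mul_le_mul_of_nonneg_right (IsUltrametricDist.norm_intCast_le_one K b) (norm_nonneg _)
      _ = ‖(u:K)‖ := one_mul _
      _ < 1 := hlt
  rw [hcast] at h6
  simp at h6

lemma natcast_norm_ge {p : ℕ} (hp : p.Prime) (hpK : ‖(p : K)‖ = (p : ℝ)⁻¹) :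
    ∀ t : ℕ, 1 ≤ t → 1 / (t : ℝ) ≤ ‖(t : K)‖ := by
  intro t
  induction t using Nat.strong_induction_on with
  | _ t ih =>
    intro ht
    by_cases hdvd : p ∣ t
    · obtain ⟨t', rfl⟩ := hdvd
      have hp1 : 1 < p := hp.one_lt
      have ht' : 1 ≤ t' := by
        rcases Nat.eq_zero_or_pos t' with rfl | h
        · simp at ht
        · exact h
      have hlt : t' < p * t' := by nlinarith
      have h1 := ih t' hlt ht'
      have hcast : ((p * t' : ℕ) : K) = (p : K) * (t' : K) := by push_cast; ring
      have heq : (1:ℝ) / ((p * t' : ℕ) : ℝ) = (p:ℝ)⁻¹ * (1 / (t' : ℝ)) := by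
        have hpp : (0:ℝ) < p := by exact_mod_cast hp.pos
        have htp : (0:ℝ) < t' := by exact_mod_cast ht'
        push_cast
        field_simp
      rw [hcast, norm_mul, hpK, heq]
      exact mul_le_mul_of_nonneg_left h1 (by positivity)
    · rw [natcast_norm_one hp hpK hdvd]
      have h2 : (0:ℝ) < t := by exact_mod_cast ht
      rw [div_le_one h2]
      exact_mod_cast ht

lemma nat_min_dvd {S : Set ℕ} (hne : S.Nonempty) (h0 : 0 ∉ S)
    (hadd : ∀ a ∈ S, ∀ b ∈ S, a + b ∈ S) (hsub : ∀ a ∈ S, ∀ b ∈ S, b < a → a - b ∈ S) :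
    ∃ k, k ∈ S ∧ 0 < k ∧ ∀ n, 0 < n → (n ∈ S ↔ k ∣ n) := by
  classical
  refine ⟨sInf S, Nat.sInf_mem hne, ?_, ?_⟩
  · rcases Nat.eq_zero_or_pos (sInf S) with h | h
    · exact absurd (h ▸ Nat.sInf_mem hne) h0
    · exact h
  · intro n hn
    constructor
    · intro hnS
      clear hn
      induction n using Nat.strong_induction_on with
      | _ n ih =>
        have hk := Nat.sInf_le hnS
        rcases eq_or_lt_of_le hk with heq | hlt
        · exact heq ▸ dvd_refl _
        · have hkpos : 0 < sInf S := by
            rcases Nat.eq_zero_or_pos (sInf S) with h | h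
            · exact absurd (h ▸ Nat.sInf_mem hne) h0
            · exact h
          have hmem : n - sInf S ∈ S := hsub n hnS (sInf S) (Nat.sInf_mem hne) hlt
          have hdvd := ih (n - sInf S) (by omega) hmem
          have : n = (n - sInf S) + sInf S := by omega
          rw [this]
          exact dvd_add hdvd (dvd_refl _)
    · rintro ⟨t, rfl⟩
      have ht : 1 ≤ t := by
        rcases Nat.eq_zero_or_pos t with rfl | h
        · simp at hn
        · exact h
      clear hn
      induction t with
      | zero => omega
      | succ t iht =>
        rcases Nat.eq_zero_or_pos t with rfl | hpos
        · simpa using Nat.sInf_mem hne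
        · have h1 := iht hpos
          have : sInf S * (t + 1) = sInf S * t + sInf S := by ring
          rw [this]
          exact hadd _ h1 _ (Nat.sInf_mem hne)

lemma multiset_log_sum (s : Multiset K) (h : ∀ x ∈ s, x ≠ 0) :
    (s.map (fun x => Real.log ‖x‖)).sum = Real.log (s.map (fun x => ‖x‖)).prod := by
  induction s using Multiset.induction_on with
  | empty => simp
  | cons a s ih =>
    rw [Multiset.map_cons, Multiset.map_cons, Multiset.sum_cons, Multiset.prod_cons]
    have ha : a ≠ 0 := h a (Multiset.mem_cons_self a s)
    have hs : ∀ x ∈ s, x ≠ 0 := fun x hx => h x (Multiset.mem_cons_of_mem hx)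
    rw [ih hs]
    rw [Real.log_mul (norm_ne_zero_iff.mpr ha) ?_]
    have hpos : (0:ℝ) < (s.map (fun x => ‖x‖)).prod := by
      refine Multiset.prod_pos ?_
      intro r hr
      obtain ⟨x, hx, rfl⟩ := Multiset.mem_map.mp hr
      exact norm_pos_iff.mpr (hs x hx)
    exact ne_of_gt hpos

lemma norm_multiset_prod' (s : Multiset K) : ‖s.prod‖ = (s.map (fun x => ‖x‖)).prod := by
  induction s using Multiset.induction_on with
  | empty => simp
  | cons a s ih => rw [Multiset.prod_cons, Multiset.map_cons, Multiset.prod_cons, norm_mul, ih]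


lemma polyIter_eval (f : K[X]) (n : ℕ) (x : K) :
    (polyIter f n).eval x = (fun z => f.eval z)^[n] x := by
  induction n with
  | zero => simp [polyIter]
  | succ n ih =>
    rw [polyIter, Polynomial.eval_comp, ih, Function.iterate_succ_apply']

lemma polyIter_add (f : K[X]) (a b : ℕ) :
    polyIter f (a + b) = (polyIter f a).comp (polyIter f b) := by
  induction a with
  | zero => simp [polyIter, Polynomial.X_comp]
  | succ a ih =>
    have h1 : a + 1 + b = (a + b) + 1 := by omega
    rw [h1, polyIter, ih, polyIter, Polynomial.comp_assoc]

lemma polyIter_mul (f : K[X]) (a b : ℕ) :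
    polyIter f (a * b) = polyIter (polyIter f a) b := by
  induction b with
  | zero => simp [polyIter]
  | succ b ih =>
    have h1 : a * (b + 1) = a + a * b := by ring
    rw [h1, polyIter_add, polyIter, ih]

lemma intC_polyIter {f : K[X]} (hf : IntC f) (n : ℕ) : IntC (polyIter f n) := by
  induction n with
  | zero => exact intC_X
  | succ n ih => exact intC_comp hf ih

lemma natDegree_polyIter (f : K[X]) (n : ℕ) :
    (polyIter f n).natDegree = f.natDegree ^ n := by
  induction n with
  | zero => simp [polyIter]
  | succ n ih => rw [polyIter, Polynomial.natDegree_comp, ih, pow_succ]; ring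

lemma normlead_polyIter {f : K[X]} {d : ℕ} (hd : 2 ≤ d) (hdeg : f.natDegree = d)
    (hlead : ‖f.leadingCoeff‖ = 1) (n : ℕ) : ‖(polyIter f n).leadingCoeff‖ = 1 := by
  induction n with
  | zero => simp [polyIter]
  | succ n ih =>
    have hne : (polyIter f n).natDegree ≠ 0 := by
      rw [natDegree_polyIter, hdeg]
      positivity
    rw [polyIter, Polynomial.leadingCoeff_comp hne, norm_mul, norm_pow, hlead, ih]
    simp

lemma polyIter_fixed {F : K[X]} {q : K} (hfix : F.eval q = q) (m : ℕ) :
    (polyIter F m).eval q = q := by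
  induction m with
  | zero => simp [polyIter]
  | succ m ih => rw [polyIter, Polynomial.eval_comp, ih, hfix]

lemma multiplier_pow {F : K[X]} {q : K} (hfix : F.eval q = q) (m : ℕ) :
    (derivative (polyIter F m)).eval q = ((derivative F).eval q) ^ m := by
  induction m with
  | zero => simp [polyIter]
  | succ m ih =>
    rw [polyIter, Polynomial.derivative_comp, Polynomial.eval_mul, Polynomial.eval_comp,
      polyIter_fixed hfix, ih, pow_succ]

lemma eval_growth {f : K[X]} {d : ℕ} (hdeg : f.natDegree = d) (hd : 1 ≤ d) (hf : IntC f)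
    (hlead : ‖f.leadingCoeff‖ = 1) {x : K} (hx : 1 < ‖x‖) : ‖f.eval x‖ = ‖x‖ ^ d := by
  have hdlt : f.natDegree < d + 1 := by omega
  rw [Polynomial.eval_eq_sum_range' hdlt, Finset.sum_range_succ]
  have hcoef : f.coeff d = f.leadingCoeff := by
    rw [← hdeg]; rfl
  have hb : ‖f.coeff d * x ^ d‖ = ‖x‖ ^ d := by
    rw [norm_mul, norm_pow, hcoef, hlead, one_mul]
  have ha : ‖∑ i ∈ Finset.range d, f.coeff i * x ^ i‖ ≤ ‖x‖ ^ (d - 1) := by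
    refine IsUltrametricDist.norm_sum_le_of_forall_le_of_nonneg (by positivity) ?_
    intro i hi
    rw [Finset.mem_range] at hi
    rw [norm_mul, norm_pow]
    calc ‖f.coeff i‖ * ‖x‖ ^ i ≤ 1 * ‖x‖ ^ i :=
      mul_le_mul_of_nonneg_right (hf i) (by positivity)
    _ = ‖x‖ ^ i := one_mul _
    _ ≤ ‖x‖ ^ (d - 1) := pow_le_pow_right₀ hx.le (by omega)
  have hlt : ‖∑ i ∈ Finset.range d, f.coeff i * x ^ i‖ < ‖f.coeff d * x ^ d‖ := by
    rw [hb]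
    calc ‖∑ i ∈ Finset.range d, f.coeff i * x ^ i‖ ≤ ‖x‖ ^ (d-1) := ha
    _ < ‖x‖ ^ d := by
        refine pow_lt_pow_right₀ hx (by omega)
  have h2 := norm_eq_of_sub_lt
    (a := (∑ i ∈ Finset.range d, f.coeff i * x ^ i) + f.coeff d * x ^ d)
    (b := f.coeff d * x ^ d) (by rw [add_sub_cancel_right]; exact hlt)
  rw [h2, hb]

lemma orbit_growth {f : K[X]} {d : ℕ} (hdeg : f.natDegree = d) (hd : 2 ≤ d) (hf : IntC f)
    (hlead : ‖f.leadingCoeff‖ = 1) {q : K} (hq : 1 < ‖q‖) (n : ℕ) :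
    ‖(fun z => f.eval z)^[n] q‖ = ‖q‖ ^ (d ^ n) := by
  induction n with
  | zero => simp
  | succ n ih =>
    rw [Function.iterate_succ_apply']
    have h1 : 1 < ‖(fun z => f.eval z)^[n] q‖ := by
      rw [ih]
      exact one_lt_pow₀ hq (by positivity)
    have h2 := eval_growth hdeg (by omega) hf hlead h1
    rw [h2, ih, ← pow_mul, pow_succ]


lemma taylor_pow' (q : K) (A : K[X]) (k : ℕ) : taylor q (A ^ k) = (taylor q A) ^ k := by
  induction k with
  | zero => simp
  | succ k ih => rw [pow_succ, Polynomial.taylor_mul, ih, pow_succ]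

lemma taylor_X_sub_C (q : K) : taylor q (X - C q) = X := by
  rw [map_sub, Polynomial.taylor_X, Polynomial.taylor_C]
  ring

section Main
variable [IsAlgClosed K] [DecidableEq K]

lemma Pn_natDegree {f : K[X]} {d : ℕ} (hd : 2 ≤ d) (hdeg : f.natDegree = d)
    {n : ℕ} (hn : 1 ≤ n) : (polyIter f n - X).natDegree = d ^ n := by
  have h1 : (X : K[X]).natDegree < (polyIter f n).natDegree := by
    rw [Polynomial.natDegree_X, natDegree_polyIter, hdeg]
    calc 1 < 2 := one_lt_two
    _ ≤ d := hd
    _ = d ^ 1 := (pow_one d).symm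
    _ ≤ d ^ n := Nat.pow_le_pow_right (by omega) hn
  rw [Polynomial.natDegree_sub_eq_left_of_natDegree_lt h1, natDegree_polyIter, hdeg]

lemma Pn_ne_zero {f : K[X]} {d : ℕ} (hd : 2 ≤ d) (hdeg : f.natDegree = d)
    {n : ℕ} (hn : 1 ≤ n) : polyIter f n - X ≠ 0 := by
  intro h
  have := Pn_natDegree hd hdeg hn (f := f)
  rw [h, Polynomial.natDegree_zero] at this
  have h2 : 0 < d ^ n := by positivity
  omega

lemma Pn_leadingCoeff {f : K[X]} {d : ℕ} (hd : 2 ≤ d) (hdeg : f.natDegree = d)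
    (hlead : ‖f.leadingCoeff‖ = 1) {n : ℕ} (hn : 1 ≤ n) :
    ‖(polyIter f n - X).leadingCoeff‖ = 1 := by
  have h1 : (polyIter f n - X).leadingCoeff = (polyIter f n).leadingCoeff := by
    rw [Polynomial.leadingCoeff, Pn_natDegree hd hdeg hn, Polynomial.coeff_sub,
      Polynomial.coeff_X]
    have h2 : ¬ (1 = d ^ n) := by
      intro h
      have : 2 ≤ d ^ n := le_trans hd (by calc d = d ^ 1 := (pow_one d).symm
                                               _ ≤ d ^ n := Nat.pow_le_pow_right (by omega) hn)
      omega
    rw [if_neg h2, sub_zero, Polynomial.leadingCoeff, natDegree_polyIter, hdeg]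
  rw [h1]
  exact normlead_polyIter hd hdeg hlead n

lemma taylor_coeff_eq {f : K[X]} {d : ℕ} (hd : 2 ≤ d) (hdeg : f.natDegree = d)
    (q : K) {n : ℕ} (hn : 1 ≤ n) :
    (taylor q (polyIter f n - X)).coeff (rootMultiplicity q (polyIter f n - X))
      = ((polyIter f n - X) /ₘ (X - C q) ^ (rootMultiplicity q (polyIter f n - X))).eval q ∧
    (∀ i < rootMultiplicity q (polyIter f n - X), (taylor q (polyIter f n - X)).coeff i = 0) := by
  set P := polyIter f n - X with hPdef
  set m := rootMultiplicity q P with hmdef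
  set g := P /ₘ (X - C q) ^ m with hgdef
  have hdecomp : (X - C q) ^ m * g = P := Polynomial.pow_mul_divByMonic_rootMultiplicity_eq P q
  have htay : taylor q P = X ^ m * taylor q g := by
    rw [← hdecomp, Polynomial.taylor_mul, taylor_pow', taylor_X_sub_C]
  constructor
  · rw [htay]
    have h3 := Polynomial.coeff_X_pow_mul (taylor q g) m 0
    rw [zero_add] at h3
    rw [h3, Polynomial.taylor_coeff_zero]
  · intro i hi
    rw [htay, mul_comm, Polynomial.coeff_mul_X_pow', if_neg (by omega)]

lemma sum_eq_log_coeff {f : K[X]} {d : ℕ} (hd : 2 ≤ d) (hdeg : f.natDegree = d)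
    (hlead : ‖f.leadingCoeff‖ = 1) (q : K) {n : ℕ} (hn : 1 ≤ n) :
    (((polyIter f n - X).roots.filter (fun ξ => ξ ≠ q)).map
      (fun ξ => Real.log ‖ξ - q‖)).sum
    = Real.log ‖(taylor q (polyIter f n - X)).coeff
        (rootMultiplicity q (polyIter f n - X))‖ := by
  set P := polyIter f n - X with hPdef
  have hP0 : P ≠ 0 := Pn_ne_zero hd hdeg hn
  set m := rootMultiplicity q P with hmdef
  set g := P /ₘ (X - C q) ^ m with hgdef
  have hdecomp : (X - C q) ^ m * g = P := Polynomial.pow_mul_divByMonic_rootMultiplicity_eq P q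
  have hgq : g.eval q ≠ 0 := Polynomial.eval_divByMonic_pow_rootMultiplicity_ne_zero q hP0
  have hg0 : g ≠ 0 := by
    intro h; rw [h] at hgq; simp at hgq
  have hcoeff := (taylor_coeff_eq hd hdeg q hn (f := f)).1
  rw [hcoeff]
  -- roots decomposition
  have hroots : P.roots = m • ({q} : Multiset K) + g.roots := by
    rw [← hdecomp, Polynomial.roots_mul (by rw [hdecomp]; exact hP0), Polynomial.roots_pow,
      Polynomial.roots_X_sub_C]
  have hfilter : P.roots.filter (fun ξ => ξ ≠ q) = g.roots := by
    rw [hroots, Multiset.filter_add]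
    have h1 : (m • ({q} : Multiset K)).filter (fun ξ => ξ ≠ q) = 0 := by
      rw [Multiset.filter_eq_nil]
      intro a ha
      have : a = q := by
        rcases Multiset.mem_nsmul.mp ha with ⟨-, h⟩
        simpa using h
      simp [this]
    have h2 : g.roots.filter (fun ξ => ξ ≠ q) = g.roots := by
      rw [Multiset.filter_eq_self]
      intro a ha
      have h3 : g.eval a = 0 := ((Polynomial.mem_roots').mp ha).2
      intro h4
      rw [h4] at h3
      exact hgq h3
    rw [h1, h2, zero_add]
  rw [hfilter]
  -- product formula
  have hsplit : g = C g.leadingCoeff * (Multiset.map (fun a => X - C a) g.roots).prod :=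
    (IsAlgClosed.splits g).eq_prod_roots
  have heval : g.eval q = g.leadingCoeff * ((g.roots.map (fun a => q - a)).prod) := by
    conv_lhs => rw [hsplit]
    rw [Polynomial.eval_mul, Polynomial.eval_C, Polynomial.eval_multiset_prod,
      Multiset.map_map]
    congr 2
    ext a
    simp
  have hlcg : ‖g.leadingCoeff‖ = 1 := by
    have h5 : P.leadingCoeff = g.leadingCoeff := by
      rw [← hdecomp, Polynomial.leadingCoeff_mul]
      have hmonic : ((X - C q) ^ m).Monic := (Polynomial.monic_X_sub_C q).pow m
      rw [hmonic.leadingCoeff, one_mul]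
    rw [← h5]
    exact Pn_leadingCoeff hd hdeg hlead hn
  have hnormeval : ‖g.eval q‖ = ((g.roots.map (fun a => q - a)).map (fun x => ‖x‖)).prod := by
    rw [heval, norm_mul, hlcg, one_mul, norm_multiset_prod']
  have hne : ∀ x ∈ g.roots.map (fun a => q - a), x ≠ 0 := by
    intro x hx
    obtain ⟨a, ha, rfl⟩ := Multiset.mem_map.mp hx
    have h3 : g.eval a = 0 := ((Polynomial.mem_roots').mp ha).2
    intro h4
    have h5 : q = a := sub_eq_zero.mp h4
    rw [← h5] at h3
    exact hgq h3
  have hmapeq : g.roots.map (fun ξ => Real.log ‖ξ - q‖)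
      = (g.roots.map (fun a => q - a)).map (fun x => Real.log ‖x‖) := by
    rw [Multiset.map_map]
    refine Multiset.map_congr rfl ?_
    intro a _
    simp only [Function.comp_apply]
    rw [norm_sub_rev]
  rw [hmapeq, multiset_log_sum _ hne, ← hnormeval]


end Main

section NP
variable [CompleteSpace K]

/-- The key recurrence-rate machine: a non-periodic point of a good-reduction polynomial
returns at most polynomially fast. -/
lemma np_machine {p : ℕ} (hp : p.Prime) (hpK : ‖(p : K)‖ = (p : ℝ)⁻¹)
    {f : K[X]} (hf : IntC f) {q : K} (hq : ‖q‖ ≤ 1)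
    (hper : ∀ n, 1 ≤ n → (fun z => f.eval z)^[n] q ≠ q) :
    ∃ C : ℝ, 0 < C ∧ C ≤ 1 ∧ ∀ n : ℕ, 1 ≤ n →
      C / n ≤ ‖(fun z => f.eval z)^[n] q - q‖ := by
  classical
  set φ : K → K := fun z => f.eval z with hφdef
  set xx : ℕ → K := fun n => φ^[n] q with hxxdef
  set y : ℕ → K := fun n => xx n - q with hydef
  have hxxadd : ∀ a b : ℕ, xx (a + b) = φ^[a] (xx b) := by
    intro a b
    simp only [hxxdef]
    exact Function.iterate_add_apply φ a b q
  have hx1 : ∀ n, ‖xx n‖ ≤ 1 := by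
    intro n
    induction n with
    | zero => simpa [hxxdef] using hq
    | succ n ih =>
      have : xx (n+1) = φ (xx n) := by
        simp only [hxxdef]
        exact Function.iterate_succ_apply' φ n q
      rw [this]
      exact intC_eval_le hf ih
  have hy1 : ∀ n, ‖y n‖ ≤ 1 := fun n =>
    le_trans (norm_sub_le_max _ _) (max_le (hx1 n) hq)
  have hyne : ∀ n, 1 ≤ n → y n ≠ 0 := by
    intro n hn h
    exact hper n hn (by simpa [hydef, sub_eq_zero] using h)
  have hypos : ∀ n, 1 ≤ n → 0 < ‖y n‖ := fun n hn => norm_pos_iff.mpr (hyne n hn)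
  have hiterle : ∀ j a, ‖a‖ ≤ 1 → ‖φ^[j] a‖ ≤ 1 := by
    intro j
    induction j with
    | zero => intro a ha; simpa using ha
    | succ j ih =>
      intro a ha
      rw [Function.iterate_succ_apply']
      exact intC_eval_le hf (ih a ha)
  have hiterlip : ∀ j a b, ‖a‖ ≤ 1 → ‖b‖ ≤ 1 → ‖φ^[j] a - φ^[j] b‖ ≤ ‖a - b‖ := by
    intro j
    induction j with
    | zero => intro a b _ _; simp
    | succ j ih =>
      intro a b ha hb
      rw [Function.iterate_succ_apply', Function.iterate_succ_apply']
      exact le_trans (lipschitz_eval hf (hiterle j a ha) (hiterle j b hb)) (ih a b ha hb)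
  by_cases hS : ∃ n, 1 ≤ n ∧ ‖y n‖ < 1
  case neg =>
    push_neg at hS
    refine ⟨1, one_pos, le_refl 1, ?_⟩
    intro n hn
    have h1 := hS n hn
    have h2 : (1:ℝ)/n ≤ 1 := by
      rw [div_le_one (by exact_mod_cast hn : (0:ℝ) < n)]
      exact_mod_cast hn
    exact le_trans h2 h1
  case pos =>
  have hadd : ∀ a ∈ {n | 1 ≤ n ∧ ‖y n‖ < 1}, ∀ b ∈ {n | 1 ≤ n ∧ ‖y n‖ < 1},
      a + b ∈ {n | 1 ≤ n ∧ ‖y n‖ < 1} := by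
    rintro a ⟨ha1, ha2⟩ b ⟨hb1, hb2⟩
    refine ⟨by omega, ?_⟩
    have h1 : y (a + b) = (φ^[a] (xx b) - φ^[a] q) + y a := by
      simp only [hydef]
      rw [hxxadd a b]
      have : xx a = φ^[a] q := rfl
      rw [this]
      ring
    rw [h1]
    refine lt_of_le_of_lt (IsUltrametricDist.norm_add_le_max _ _) (max_lt ?_ ha2)
    exact lt_of_le_of_lt (hiterlip a (xx b) q (hx1 b) hq) hb2
  have hsub : ∀ a ∈ {n | 1 ≤ n ∧ ‖y n‖ < 1}, ∀ b ∈ {n | 1 ≤ n ∧ ‖y n‖ < 1},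
      b < a → a - b ∈ {n | 1 ≤ n ∧ ‖y n‖ < 1} := by
    rintro a ⟨ha1, ha2⟩ b ⟨hb1, hb2⟩ hba
    refine ⟨by omega, ?_⟩
    have h1 : y (a - b) = (φ^[a-b] q - φ^[a-b] (xx b)) + y a := by
      simp only [hydef]
      have h2 : xx a = φ^[a-b] (xx b) := by
        rw [← hxxadd (a-b) b]
        congr 1
        omega
      rw [h2]
      have : xx (a-b) = φ^[a-b] q := rfl
      rw [this]
      ring
    rw [h1]
    refine lt_of_le_of_lt (IsUltrametricDist.norm_add_le_max _ _) (max_lt ?_ ha2)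
    have h3 : ‖φ^[a-b] q - φ^[a-b] (xx b)‖ ≤ ‖q - xx b‖ := hiterlip _ q (xx b) hq (hx1 b)
    refine lt_of_le_of_lt h3 ?_
    rw [norm_sub_rev]
    exact hb2
  obtain ⟨k, hkS, hk0, hkiff⟩ := nat_min_dvd (S := {n | 1 ≤ n ∧ ‖y n‖ < 1})
    hS (by simp) hadd hsub
  -- now k = minimal return scale
  obtain ⟨hk1, hyk⟩ := hkS
  set F : K[X] := polyIter f k with hFdef
  have hFeval : ∀ z : K, F.eval z = φ^[k] z := fun z => polyIter_eval f k z
  have hFint : IntC F := intC_polyIter hf k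
  have hμle : ‖(derivative F).eval q‖ ≤ 1 := intC_eval_le (intC_derivative hFint) hq
  have hykm : ∀ m, 1 ≤ m → ‖y (k*m)‖ < 1 := by
    intro m hm
    have h1 : k * m ∈ {n | 1 ≤ n ∧ ‖y n‖ < 1} := by
      rw [hkiff (k*m) (Nat.mul_pos hk0 (by omega : 0 < m))]
      exact Dvd.intro m rfl
    exact h1.2
  have hnotdvd : ∀ n, 1 ≤ n → ¬ (k ∣ n) → 1 ≤ ‖y n‖ := by
    intro n hn hnd
    by_contra h
    push_neg at h
    exact hnd ((hkiff n (by omega)).mp ⟨hn, h⟩)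
  by_cases hcase : ‖(derivative F).eval q‖ = 1
  case neg =>
    -- CONTRACTION CASE
    have hμlt : ‖(derivative F).eval q‖ < 1 := lt_of_le_of_ne hμle hcase
    set r : ℝ := ‖y k‖ with hrdef
    have hr1 : r < 1 := hyk
    have hr0 : 0 < r := hypos k hk1
    set L : ℝ := max ‖(derivative F).eval q‖ r with hLdef
    have hL1 : L < 1 := max_lt hμlt hr1
    have hL0 : 0 < L := lt_of_lt_of_le hr0 (le_max_right _ _)
    have hcontr : ∀ a b : K, ‖a - q‖ ≤ r → ‖b - q‖ ≤ r →
        ‖F.eval a - F.eval b‖ ≤ L * ‖a - b‖ := by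
      intro a b ha hb
      have ha1 : ‖a‖ ≤ 1 := norm_le_one_of_ball hq (le_trans ha hr1.le)
      have hb1 : ‖b‖ ≤ 1 := norm_le_one_of_ball hq (le_trans hb hr1.le)
      have h2 := taylor_second_order hFint ha1 hb1
      have hab : ‖a - b‖ ≤ r := by
        have : a - b = (a - q) - (b - q) := by ring
        rw [this]
        exact le_trans (norm_sub_le_max _ _) (max_le ha hb)
      have hD : ‖(derivative F).eval b‖ ≤ L := by
        have h3 := lipschitz_eval (intC_derivative hFint) hb1 hq
        have h4 : (derivative F).eval b = ((derivative F).eval b - (derivative F).eval q)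
            + (derivative F).eval q := by ring
        rw [h4]
        refine le_trans (IsUltrametricDist.norm_add_le_max _ _) (max_le ?_ (le_max_left _ _))
        exact le_trans (le_trans h3 hb) (le_max_right _ _)
      have h5 : F.eval a - F.eval b = (F.eval a - F.eval b - (derivative F).eval b * (a-b))
          + (derivative F).eval b * (a - b) := by ring
      rw [h5]
      refine le_trans (IsUltrametricDist.norm_add_le_max _ _) (max_le ?_ ?_)
      · refine le_trans h2 ?_
        rw [pow_two]
        exact mul_le_mul (le_trans hab (le_max_right _ _)) le_rfl (norm_nonneg _) hL0.le
      · rw [norm_mul]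
        exact mul_le_mul_of_nonneg_right hD (norm_nonneg _)
    have hzball : ∀ m, 1 ≤ m → ‖y (k*m)‖ ≤ r := by
      intro m hm
      induction m with
      | zero => omega
      | succ m ih =>
        rcases Nat.eq_zero_or_pos m with rfl | hm0
        · have hh : k*(0+1) = k := by ring
          exact le_of_eq (by rw [hh])
        · have h1 : xx (k*(m+1)) = F.eval (xx (k*m)) := by
            rw [hFeval, ← hxxadd k (k*m)]
            congr 1
            ring
          have h2 : y (k*(m+1)) = (F.eval (xx (k*m)) - F.eval q) + y k := by
            simp only [hydef]
            rw [h1]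
            have h3 : F.eval q = xx k := hFeval q
            rw [h3]
            ring
          rw [h2]
          refine le_trans (IsUltrametricDist.norm_add_le_max _ _) (max_le ?_ le_rfl)
          have h4 := hcontr (xx (k*m)) q (ih hm0) (by simpa using hr0.le)
          refine le_trans h4 ?_
          have h5 : ‖xx (k*m) - q‖ ≤ r := ih hm0
          nlinarith [hL0.le, hL1.le, norm_nonneg (xx (k*m) - q)]
    -- consecutive distances decay geometrically
    set u : ℕ → K := fun m => xx (k*(m+1)) with hudef
    have hstep : ∀ m, ‖u m - u (m+1)‖ ≤ r * L ^ m := by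
      intro m
      induction m with
      | zero =>
        have h1 : ‖u 0 - u 1‖ ≤ r := by
          have : u 0 - u 1 = y (k*1) - y (k*2) := by simp only [hudef, hydef]; ring
          rw [this]
          exact le_trans (norm_sub_le_max _ _)
            (max_le (hzball 1 le_rfl) (hzball 2 (by omega)))
        simpa using h1
      | succ m ih =>
        have h1 : u (m+1) = F.eval (u m) := by
          simp only [hudef]
          rw [hFeval, ← hxxadd k (k*(m+1))]
          congr 1
          ring
        have h2 : u (m+2) = F.eval (u (m+1)) := by
          simp only [hudef]
          rw [hFeval, ← hxxadd k (k*(m+2))]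
          congr 1
          ring
        rw [h1, h2]
        have h3 := hcontr (u m) (u (m+1)) (hzball (m+1) (by omega)) (hzball (m+2) (by omega))
        refine le_trans h3 ?_
        calc L * ‖u m - u (m+1)‖ ≤ L * (r * L ^ m) :=
          mul_le_mul_of_nonneg_left ih hL0.le
        _ = r * L ^ (m+1) := by ring
    have hcauchy : CauchySeq u := by
      refine cauchySeq_of_le_geometric L r hL1 ?_
      intro m
      rw [dist_eq_norm]
      calc ‖u m - u (m+1)‖ ≤ r * L ^ m := hstep m
      _ = r * L ^ m := rfl
    obtain ⟨ξ, hξ⟩ := cauchySeq_tendsto_of_complete hcauchy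
    have hFξ : F.eval ξ = ξ := by
      have h1 : Tendsto (fun m => F.eval (u m)) atTop (nhds (F.eval ξ)) :=
        ((Polynomial.continuous F).tendsto ξ).comp hξ
      have h2 : (fun m => F.eval (u m)) = fun m => u (m+1) := by
        funext m
        simp only [hudef]
        rw [hFeval, ← hxxadd k (k*(m+1))]
        congr 1
        ring
      rw [h2] at h1
      have h3 : Tendsto (fun m => u (m+1)) atTop (nhds ξ) :=
        (tendsto_add_atTop_iff_nat 1).mpr hξ
      exact tendsto_nhds_unique h1 h3
    have hξq : ξ ≠ q := by
      intro h
      rw [h] at hFξ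
      have : y k = 0 := by
        simp only [hydef]
        have h3 : F.eval q = xx k := hFeval q
        rw [← h3, hFξ, sub_self]
      exact hyne k hk1 this
    set ε : ℝ := ‖ξ - q‖ with hεdef
    have hε0 : 0 < ε := norm_pos_iff.mpr (sub_ne_zero.mpr hξq)
    obtain ⟨N, hN⟩ := (Metric.tendsto_atTop.mp hξ) ε hε0
    have heventual : ∀ m, N ≤ m → ‖u m - q‖ = ε := by
      intro m hm
      have h1 := hN m hm
      rw [dist_eq_norm] at h1
      refine norm_eq_of_sub_lt (a := u m - q) (b := ξ - q) ?_
      have h2 : u m - q - (ξ - q) = u m - ξ := by ring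
      rw [h2]
      exact h1
    -- lower bound over all multiples
    have hfin : ∃ c, 0 < c ∧ ∀ m, 1 ≤ m → c ≤ ‖y (k*m)‖ := by
      have hne2 : (Finset.Icc 1 (N+1)).Nonempty := Finset.nonempty_Icc.mpr (by omega)
      set c2 : ℝ := (Finset.Icc 1 (N+1)).inf' hne2 (fun m => ‖y (k*m)‖) with hc2def
      refine ⟨min ε c2, lt_min hε0 ?_, ?_⟩
      · rw [Finset.lt_inf'_iff]
        intro i hi
        rw [Finset.mem_Icc] at hi
        exact hypos (k*i) (Nat.mul_pos hk0 (by omega : 0 < i))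
      · intro m hm
        by_cases hmN : m ≤ N + 1
        · refine le_trans (min_le_right _ _) ?_
          exact Finset.inf'_le _ (by rw [Finset.mem_Icc]; omega)
        · have h1 : N ≤ m - 1 := by omega
          have h2 := heventual (m-1) h1
          have h3 : u (m-1) - q = y (k*m) := by
            have hmm : m - 1 + 1 = m := by omega
            simp only [hudef, hydef, hmm]
          rw [h3] at h2
          rw [h2]
          exact min_le_left _ _
    obtain ⟨c, hc0, hc⟩ := hfin
    refine ⟨min c 1, lt_min hc0 one_pos, min_le_right _ _, ?_⟩
    intro n hn
    have hCn : min c 1 / n ≤ min c 1 := by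
      refine div_le_self (le_min hc0.le zero_le_one) (by exact_mod_cast hn)
    by_cases hdvd : k ∣ n
    · obtain ⟨m, rfl⟩ := hdvd
      have hm1 : 1 ≤ m := by
        rcases Nat.eq_zero_or_pos m with rfl | h
        · simp at hn
        · exact h
      exact le_trans hCn (le_trans (min_le_left _ _) (hc m hm1))
    · exact le_trans hCn (le_trans (min_le_right _ _) (hnotdvd n hn hdvd))
  case pos =>
    have hiso1 : ∀ a b : K, ‖a - q‖ < 1 → ‖b - q‖ < 1 → ‖F.eval a - F.eval b‖ = ‖a - b‖ :=
      fun a b ha hb => eval_isometry hFint hq hcase ha hb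
    have hq01 : ‖q - q‖ < 1 := by simpa using one_pos
    have hFball : ∀ a : K, ‖a - q‖ < 1 → ‖F.eval a - q‖ < 1 := by
      intro a ha
      have h3 : F.eval q = xx k := hFeval q
      have h1 : F.eval a - q = (F.eval a - F.eval q) + y k := by
        rw [h3]; simp only [hydef]; ring
      rw [h1]
      refine lt_of_le_of_lt (IsUltrametricDist.norm_add_le_max _ _) (max_lt ?_ hyk)
      rw [hiso1 a q ha hq01]
      exact ha
    have hiso : ∀ j, ∀ a b : K, ‖a - q‖ < 1 → ‖b - q‖ < 1 →
        ‖φ^[k*j] a - φ^[k*j] b‖ = ‖a - b‖ ∧ ‖φ^[k*j] a - q‖ < 1 := by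
      intro j
      induction j with
      | zero => intro a b ha hb; constructor
                · simp
                · simpa using ha
      | succ j ih =>
        intro a b ha hb
        have hidx : k*(j+1) = k*j + k := by ring
        have h1 : φ^[k*(j+1)] a = φ^[k*j] (F.eval a) := by
          rw [hidx, Function.iterate_add_apply, ← hFeval]
        have h2 : φ^[k*(j+1)] b = φ^[k*j] (F.eval b) := by
          rw [hidx, Function.iterate_add_apply, ← hFeval]
        obtain ⟨ihab, ihball⟩ := ih (F.eval a) (F.eval b) (hFball a ha) (hFball b hb)
        constructor
        · rw [h1, h2, ihab, hiso1 a b ha hb]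
        · rw [h1]; exact ihball
    have hdiff : ∀ m m' : ℕ, m' ≤ m → ‖y (k*m) - y (k*m')‖ = ‖y (k*(m - m'))‖ := by
      intro m m' hmm
      have harith : k*m' + k*(m - m') = k*m := by
        have h5 : m' + (m - m') = m := by omega
        calc k*m' + k*(m-m') = k*(m' + (m-m')) := by ring
        _ = k*m := by rw [h5]
      have h1 : xx (k*m) = φ^[k*m'] (xx (k*(m - m'))) := by
        rw [← harith, hxxadd]
      have h2 : xx (k*m') = φ^[k*m'] q := rfl
      have h0 : y (k*m) - y (k*m') = φ^[k*m'] (xx (k*(m - m'))) - φ^[k*m'] q := by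
        simp only [hydef]
        rw [h1, h2]
        ring
      rw [h0]
      rcases Nat.eq_zero_or_pos (m - m') with hz | hpos2
      · rw [hz]
        have h6 : xx (k*0) = q := rfl
        have h7 : y (k*0) = 0 := by simp only [hydef]; rw [h6, sub_self]
        rw [h6, h7]
        simp
      · have hball : ‖xx (k*(m - m')) - q‖ < 1 := hykm (m-m') hpos2
        exact (hiso m' (xx (k*(m-m'))) q hball hq01).1
    by_cases hbd : ∃ c : ℝ, 0 < c ∧ ∀ m, 1 ≤ m → c ≤ ‖y (k*m)‖
    · obtain ⟨c, hc0, hc⟩ := hbd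
      refine ⟨min c 1, lt_min hc0 one_pos, min_le_right _ _, ?_⟩
      intro n hn
      have hCn : min c 1 / n ≤ min c 1 :=
        div_le_self (le_min hc0.le zero_le_one) (by exact_mod_cast hn)
      by_cases hdvd : k ∣ n
      · obtain ⟨m, rfl⟩ := hdvd
        have hm1 : 1 ≤ m := by
          rcases Nat.eq_zero_or_pos m with rfl | h
          · simp at hn
          · exact h
        exact le_trans hCn (le_trans (min_le_left _ _) (hc m hm1))
      · exact le_trans hCn (le_trans (min_le_right _ _) (hnotdvd n hn hdvd))
    · push_neg at hbd
      have hpn0 : 0 < ‖(p:K)‖ := by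
        rw [hpK]
        have : (0:ℝ) < p := by exact_mod_cast hp.pos
        positivity
      have hpl1 : ‖(p:K)‖ < 1 := by
        rw [hpK, inv_lt_one_iff₀]; right; exact_mod_cast hp.one_lt
      obtain ⟨m₁, hm₁1, hη⟩ := hbd ‖(p:K)‖ hpn0
      set η : ℝ := ‖y (k*m₁)‖ with hηdef
      have hη0 : 0 < η := hypos _ (Nat.mul_pos hk0 (by omega))
      obtain ⟨m₂, hm₂1, hε⟩ := hbd (η * ‖(p:K)‖) (by positivity)
      set ε : ℝ := ‖y (k*m₂)‖ with hεdef
      have hε0 : 0 < ε := hypos _ (Nat.mul_pos hk0 (by omega))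
      have hεη : ε < η * ‖(p:K)‖ := hε
      have hεltη : ε < η := by nlinarith
      set T : Set ℕ := {m | 1 ≤ m ∧ ‖y (k*m)‖ ≤ ε} with hTdef
      have hTne : T.Nonempty := ⟨m₂, hm₂1, le_rfl⟩
      have hT0 : (0:ℕ) ∉ T := by
        intro h
        have := h.1
        omega
      have hTadd : ∀ a ∈ T, ∀ b ∈ T, a + b ∈ T := by
        rintro a ⟨ha1, ha2⟩ b ⟨hb1, hb2⟩
        refine ⟨by omega, ?_⟩
        have h1 : y (k*(a+b)) = (y (k*(a+b)) - y (k*b)) + y (k*b) := by ring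
        rw [h1]
        refine le_trans (IsUltrametricDist.norm_add_le_max _ _) (max_le ?_ hb2)
        rw [hdiff (a+b) b (by omega)]
        have h2 : a + b - b = a := by omega
        rw [h2]; exact ha2
      have hTsub : ∀ a ∈ T, ∀ b ∈ T, b < a → a - b ∈ T := by
        rintro a ⟨ha1, ha2⟩ b ⟨hb1, hb2⟩ hba
        refine ⟨by omega, ?_⟩
        rw [← hdiff a b hba.le]
        exact le_trans (norm_sub_le_max _ _) (max_le ha2 hb2)
      obtain ⟨m₀, hm₀T, hm₀0, hm₀iff⟩ := nat_min_dvd hTne hT0 hTadd hTsub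
      set κ : ℝ := max (ε / η) η with hκdef
      have hκp : κ < ‖(p:K)‖ := by
        refine max_lt ?_ hη
        rw [div_lt_iff₀ hη0]
        calc ε < η * ‖(p:K)‖ := hεη
        _ = ‖(p:K)‖ * η := by ring
      have hκ0 : 0 < κ := lt_of_lt_of_le hη0 (le_max_right _ _)
      have hmul : ∀ m, m ∈ T → ‖(derivative (polyIter f (k*m))).eval q - 1‖ ≤ κ := by
        rintro m ⟨hm1, hm2⟩
        have hgeval : ∀ z, (polyIter f (k*m)).eval z = φ^[k*m] z :=
          fun z => polyIter_eval f (k*m) z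
        have hgint : IntC (polyIter f (k*m)) := intC_polyIter hf (k*m)
        have h2 := taylor_second_order hgint (hx1 (k*m₁)) hq
        have h3 : (polyIter f (k*m)).eval (xx (k*m₁)) = xx (k*(m + m₁)) := by
          rw [hgeval, ← hxxadd (k*m) (k*m₁)]
          congr 1; ring
        have h4 : (polyIter f (k*m)).eval q = xx (k*m) := hgeval q
        rw [h3, h4] at h2
        have hE : ‖xx (k*(m+m₁)) - xx (k*m) - y (k*m₁)‖ ≤ ε := by
          have h5 : xx (k*(m+m₁)) - xx (k*m) - y (k*m₁)
              = (y (k*(m+m₁)) - y (k*m₁)) - y (k*m) := by simp only [hydef]; ring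
          rw [h5]
          refine le_trans (norm_sub_le_max _ _) (max_le ?_ hm2)
          rw [hdiff (m+m₁) m₁ (by omega)]
          have h6 : m + m₁ - m₁ = m := by omega
          rw [h6]; exact hm2
        have h7 : ((derivative (polyIter f (k*m))).eval q - 1) * y (k*m₁)
            = -(xx (k*(m+m₁)) - xx (k*m)
                - (derivative (polyIter f (k*m))).eval q * (xx (k*m₁) - q))
              + (xx (k*(m+m₁)) - xx (k*m) - y (k*m₁)) := by
          simp only [hydef]; ring
        have hxxq : ‖xx (k*m₁) - q‖ = η := rfl
        have h8 : ‖((derivative (polyIter f (k*m))).eval q - 1) * y (k*m₁)‖ ≤ max (η^2) ε := by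
          rw [h7]
          refine le_trans (IsUltrametricDist.norm_add_le_max _ _) (max_le ?_ ?_)
          · rw [norm_neg]
            refine le_trans h2 ?_
            rw [hxxq]
            exact le_max_left _ _
          · exact le_trans hE (le_max_right _ _)
        rw [norm_mul] at h8
        have hyη : ‖y (k*m₁)‖ = η := rfl
        rw [hyη] at h8
        have h9 : max (η^2) ε ≤ κ * η := by
          rw [hκdef, max_mul_of_nonneg _ _ hη0.le]
          have h10 : ε / η * η = ε := by field_simp
          rw [h10]
          rw [max_comm]
          apply max_le
          · exact le_max_left _ _
          · refine le_trans (le_of_eq (by ring)) (le_max_right _ _ )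
        have h11 := le_trans h8 h9
        exact le_of_mul_le_mul_right h11 hη0
      set Z : ℕ → K := fun t => y (k*(m₀*t)) with hZdef
      have hZT : ∀ t, 1 ≤ t → m₀ * t ∈ T := by
        intro t ht
        rw [hm₀iff (m₀*t) (Nat.mul_pos hm₀0 (by omega))]
        exact Dvd.intro t rfl
      have hZε : ∀ t, 1 ≤ t → ‖Z t‖ ≤ ε := fun t ht => (hZT t ht).2
      have hZpos : ∀ t, 1 ≤ t → 0 < ‖Z t‖ :=
        fun t ht => hypos _ (Nat.mul_pos hk0 (Nat.mul_pos hm₀0 (by omega)))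
      set κ' : ℝ := max κ ε with hκ'def
      have hκ'p : κ' < ‖(p:K)‖ := max_lt hκp (lt_trans hεltη hη)
      have hκ'0 : 0 < κ' := lt_of_lt_of_le hκ0 (le_max_left _ _)
      have hqadd : ∀ s t, 1 ≤ s → 1 ≤ t → ‖Z (s+t) - Z s - Z t‖ ≤ κ' * ‖Z t‖ := by
        intro s t hs ht
        have hgeval : ∀ z, (polyIter f (k*(m₀*s))).eval z = φ^[k*(m₀*s)] z :=
          fun z => polyIter_eval f _ z
        have hgint : IntC (polyIter f (k*(m₀*s))) := intC_polyIter hf _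
        have h2 := taylor_second_order hgint (hx1 (k*(m₀*t))) hq
        have h3 : (polyIter f (k*(m₀*s))).eval (xx (k*(m₀*t))) = xx (k*(m₀*(s+t))) := by
          rw [hgeval, ← hxxadd (k*(m₀*s)) (k*(m₀*t))]
          congr 1; ring
        have h4 : (polyIter f (k*(m₀*s))).eval q = xx (k*(m₀*s)) := hgeval q
        rw [h3, h4] at h2
        have hlam : ‖(derivative (polyIter f (k*(m₀*s)))).eval q - 1‖ ≤ κ :=
          hmul (m₀*s) (hZT s hs)
        have h5 : Z (s+t) - Z s - Z t
            = (xx (k*(m₀*(s+t))) - xx (k*(m₀*s))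
                - (derivative (polyIter f (k*(m₀*s)))).eval q * (xx (k*(m₀*t)) - q))
              + ((derivative (polyIter f (k*(m₀*s)))).eval q - 1) * Z t := by
          simp only [hZdef, hydef]; ring
        rw [h5]
        refine le_trans (IsUltrametricDist.norm_add_le_max _ _) (max_le ?_ ?_)
        · refine le_trans h2 ?_
          have h6 : ‖xx (k*(m₀*t)) - q‖ = ‖Z t‖ := rfl
          rw [h6, pow_two]
          exact mul_le_mul_of_nonneg_right
            (le_trans (hZε t ht) (le_max_right _ _)) (norm_nonneg _)
        · rw [norm_mul]
          exact mul_le_mul_of_nonneg_right (le_trans hlam (le_max_left _ _)) (norm_nonneg _)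
      have hiz : ∀ t, 1 ≤ t → ∀ i, 1 ≤ i → ‖Z (i*t) - (i:K) * Z t‖ ≤ κ' * ‖Z t‖ := by
        intro t ht i
        induction i with
        | zero => intro h; omega
        | succ i ih =>
          intro _
          rcases Nat.eq_zero_or_pos i with rfl | hi0
          · have h4 : (0+1)*t = t := by ring
            rw [h4]
            have h5 : ((0+1 : ℕ):K) = 1 := by push_cast; ring
            rw [h5, one_mul, sub_self, norm_zero]
            positivity
          · have h1 := ih hi0
            have h2 := hqadd (i*t) t (Nat.mul_pos hi0 (by omega)) ht
            have h3 : Z ((i+1)*t) - ((i+1 : ℕ):K) * Z t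
                = (Z (i*t + t) - Z (i*t) - Z t) + (Z (i*t) - (i:K) * Z t) := by
              have h4 : (i+1)*t = i*t + t := by ring
              rw [h4]
              push_cast
              ring
            rw [h3]
            exact le_trans (IsUltrametricDist.norm_add_le_max _ _) (max_le h2 h1)
      have hZp2 : ∀ t, 1 ≤ t → ‖Z (p*t)‖ = ‖(p:K)‖ * ‖Z t‖ := by
        intro t ht
        have h1 := hiz t ht p (by have := hp.one_lt; omega)
        have h3 : κ' * ‖Z t‖ < ‖(p:K) * Z t‖ := by
          rw [norm_mul]
          exact mul_lt_mul_of_pos_right hκ'p (hZpos t ht)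
        have h4 := norm_eq_of_sub_lt (a := Z (p*t)) (b := (p:K) * Z t)
          (lt_of_le_of_lt h1 h3)
        rw [h4, norm_mul]
      have hZu : ∀ i, 1 ≤ i → ¬ p ∣ i → ‖Z i‖ = ‖Z 1‖ := by
        intro i hi hpi
        have h1 := hiz 1 le_rfl i hi
        rw [Nat.mul_one] at h1
        have hnorm_i : ‖(i:K)‖ = 1 := natcast_norm_one hp hpK hpi
        have h3 : κ' * ‖Z 1‖ < ‖(i:K) * Z 1‖ := by
          rw [norm_mul, hnorm_i, one_mul]
          nlinarith [hZpos 1 le_rfl, lt_trans hκ'p hpl1]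
        have h4 := norm_eq_of_sub_lt (a := Z i) (b := (i:K) * Z 1) (lt_of_le_of_lt h1 h3)
        rw [h4, norm_mul, hnorm_i, one_mul]
      have hZlow : ∀ t, 1 ≤ t → ‖Z 1‖ / t ≤ ‖Z t‖ := by
        intro t
        induction t using Nat.strong_induction_on with
        | _ t ih =>
          intro ht
          by_cases hdvd : p ∣ t
          · obtain ⟨t', rfl⟩ := hdvd
            have ht' : 1 ≤ t' := by
              rcases Nat.eq_zero_or_pos t' with rfl | h
              · simp at ht
              · exact h
            have hlt : t' < p * t' := by
              have h9 := mul_lt_mul_of_pos_right hp.one_lt (show (0:ℕ) < t' by omega)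
              simpa using h9
            have h1 := ih t' hlt ht'
            rw [hZp2 t' ht', hpK]
            have hpp : (0:ℝ) < p := by exact_mod_cast hp.pos
            have htp : (0:ℝ) < t' := by exact_mod_cast ht'
            have heq : ‖Z 1‖ / ((p * t' : ℕ):ℝ) = (p:ℝ)⁻¹ * (‖Z 1‖ / t') := by
              push_cast
              field_simp
            rw [heq]
            exact mul_le_mul_of_nonneg_left h1 (by positivity)
          · rw [hZu t ht hdvd]
            exact div_le_self (norm_nonneg _) (by exact_mod_cast ht)
      refine ⟨min 1 (min ε ‖Z 1‖), lt_min one_pos (lt_min hε0 (hZpos 1 le_rfl)),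
        min_le_left _ _, ?_⟩
      intro n hn
      have hCC0 : 0 < min 1 (min ε ‖Z 1‖) := lt_min one_pos (lt_min hε0 (hZpos 1 le_rfl))
      have hCCn : min 1 (min ε ‖Z 1‖) / n ≤ min 1 (min ε ‖Z 1‖) :=
        div_le_self hCC0.le (by exact_mod_cast hn)
      by_cases hdvd : k ∣ n
      · obtain ⟨m, rfl⟩ := hdvd
        have hm1 : 1 ≤ m := by
          rcases Nat.eq_zero_or_pos m with rfl | h
          · simp at hn
          · exact h
        by_cases hdvd2 : m₀ ∣ m
        · obtain ⟨t, rfl⟩ := hdvd2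
          have ht1 : 1 ≤ t := by
            rcases Nat.eq_zero_or_pos t with rfl | h
            · simp at hm1
            · exact h
          have h1 := hZlow t ht1
          have hyZ : ‖y (k*(m₀*t))‖ = ‖Z t‖ := rfl
          rw [hyZ]
          refine le_trans ?_ h1
          have htn : (t:ℝ) ≤ ((k*(m₀*t) : ℕ):ℝ) := by
            have : t ≤ k*(m₀*t) := by
              calc t = 1*(1*t) := by ring
              _ ≤ k*(m₀*t) := by
                  exact Nat.mul_le_mul hk1 (Nat.mul_le_mul hm₀0 le_rfl)
            exact_mod_cast this
          refine div_le_div₀ (norm_nonneg _) ?_ (by exact_mod_cast ht1) htn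
          exact le_trans (min_le_right _ _) (min_le_right _ _)
        · have h1 : ¬ (m ∈ T) := fun h => hdvd2 ((hm₀iff m (by omega)).mp h)
          have h2 : ε < ‖y (k*m)‖ := by
            by_contra h3
            push_neg at h3
            exact h1 ⟨hm1, h3⟩
          refine le_trans ?_ h2.le
          refine le_trans hCCn ?_
          exact le_trans (min_le_right _ _) (min_le_left _ _)
      · exact le_trans hCCn (le_trans (min_le_left _ _) (hnotdvd n hn hdvd))

end NP

lemma ordge_mul {A B : K[X]} {a b : ℕ} (hA : ∀ i < a, A.coeff i = 0)
    (hB : ∀ i < b, B.coeff i = 0) : ∀ i < a + b, (A*B).coeff i = 0 := by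
  intro i hi
  rw [Polynomial.coeff_mul]
  refine Finset.sum_eq_zero ?_
  rintro ⟨u, v⟩ huv
  rw [Finset.HasAntidiagonal.mem_antidiagonal] at huv
  by_cases hu : u < a
  · rw [hA u hu, zero_mul]
  · have hv : v < b := by omega
    rw [hB v hv, mul_zero]

lemma ordge_pow_sub {w : K[X]} {ν : ℕ} (hν : 1 ≤ ν) (hw : ∀ i < ν, w.coeff i = 0) :
    ∀ j : ℕ, ∀ i < j - 1 + ν, ((X + w)^j - X^j).coeff i = 0 := by
  intro j
  induction j with
  | zero =>
    intro i hi
    simp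
  | succ j ih =>
    intro i hi
    have hdecomp : (X + w)^(j+1) - X^(j+1) = (X + w) * ((X+w)^j - X^j) + w * X^j := by ring
    rw [hdecomp, Polynomial.coeff_add]
    have hXw : ∀ i' < 1, ((X : K[X]) + w).coeff i' = 0 := by
      intro i' hi'
      have hi0 : i' = 0 := by omega
      subst hi0
      rw [Polynomial.coeff_add, Polynomial.coeff_X_zero, hw 0 (by omega), add_zero]
    have h1 : ((X + w) * ((X+w)^j - X^j)).coeff i = 0 :=
      ordge_mul hXw ih i (by omega)
    have h2 : (w * X^j).coeff i = 0 := by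
      refine ordge_mul hw (b := j) ?_ i (by omega)
      intro i' hi'
      rw [Polynomial.coeff_X_pow, if_neg (by omega)]
    rw [h1, h2, add_zero]

lemma comp_shift_coeff {A w : K[X]} {ν : ℕ} (hν : 2 ≤ ν)
    (hA : ∀ i < ν, A.coeff i = 0) (hw : ∀ i < ν, w.coeff i = 0) :
    ∀ i ≤ ν, (A.comp (X + w)).coeff i = A.coeff i := by
  intro i hi
  have hAexp : (∑ j ∈ Finset.range (A.natDegree + 1), C (A.coeff j) * X^j) = A := by
    conv_rhs => rw [Polynomial.as_sum_range' A (A.natDegree+1) (Nat.lt_succ_self _)]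
    refine Finset.sum_congr rfl ?_
    intro j _
    rw [Polynomial.C_mul_X_pow_eq_monomial]
  have hcompexp : A.comp (X + w)
      = ∑ j ∈ Finset.range (A.natDegree + 1), C (A.coeff j) * (X + w)^j := by
    rw [Polynomial.comp_eq_sum_left]
    exact Polynomial.sum_over_range A (fun n => by simp)
  have hdiffeq : (∑ j ∈ Finset.range (A.natDegree + 1), C (A.coeff j) * ((X + w)^j - X^j))
      = A.comp (X + w) - A := by
    have hsplit : ∀ j ∈ Finset.range (A.natDegree+1), C (A.coeff j) * ((X + w)^j - X^j)
        = C (A.coeff j) * (X+w)^j - C (A.coeff j) * X^j := fun j _ => by ring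
    rw [Finset.sum_congr rfl hsplit, Finset.sum_sub_distrib, hAexp, ← hcompexp]
  have hzero : (A.comp (X + w) - A).coeff i = 0 := by
    rw [← hdiffeq, Polynomial.finset_sum_coeff]
    refine Finset.sum_eq_zero ?_
    intro j _
    rw [Polynomial.coeff_C_mul]
    by_cases hj : j < ν
    · rw [hA j hj, zero_mul]
    · rw [ordge_pow_sub (by omega) hw j i (by omega), mul_zero]
  have h7 : (A.comp (X+w)).coeff i - A.coeff i = 0 := by
    rw [← Polynomial.coeff_sub]
    exact hzero
  exact sub_eq_zero.mp h7

lemma iter_congr {g : K[X]} {ν : ℕ} (hν : 2 ≤ ν) (h0 : ∀ i < ν, (g - X).coeff i = 0) :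
    ∀ t : ℕ, ∀ i ≤ ν, (polyIter g t - X).coeff i = (t:K) * (g - X).coeff i := by
  intro t
  induction t with
  | zero =>
    intro i hi
    simp [polyIter]
  | succ t ih =>
    intro i hi
    have hW : ∀ i' < ν, (polyIter g t - X).coeff i' = 0 := by
      intro i' hi'
      rw [ih i' hi'.le, h0 i' hi', mul_zero]
    have hdec : polyIter g (t+1) - X = (polyIter g t - X) + (g - X).comp (polyIter g t) := by
      show g.comp (polyIter g t) - X = _
      rw [Polynomial.sub_comp, Polynomial.X_comp]
      ring
    have hcomp2 : (g - X).comp (polyIter g t) = (g - X).comp (X + (polyIter g t - X)) := by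
      congr 1
      ring
    rw [hdec, Polynomial.coeff_add, ih i hi, hcomp2, comp_shift_coeff hν h0 hW i hi]
    push_cast
    ring

lemma psi_comp (q : K) (A B : K[X]) :
    (A.comp B).comp (X + C q) - C q
      = (A.comp (X + C q) - C q).comp (B.comp (X + C q) - C q) := by
  have h1 : (X + C q).comp (B.comp (X + C q) - C q) = B.comp (X + C q) := by
    rw [Polynomial.add_comp, Polynomial.X_comp, Polynomial.C_comp]
    ring
  calc (A.comp B).comp (X + C q) - C q = A.comp (B.comp (X + C q)) - C q := by
        rw [Polynomial.comp_assoc]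
  _ = A.comp ((X + C q).comp (B.comp (X + C q) - C q)) - C q := by rw [h1]
  _ = (A.comp (X + C q)).comp (B.comp (X + C q) - C q) - C q := by
        rw [Polynomial.comp_assoc]
  _ = (A.comp (X + C q) - C q).comp (B.comp (X + C q) - C q) := by
        rw [Polynomial.sub_comp, Polynomial.C_comp]

lemma psi_polyIter (q : K) (A : K[X]) (t : ℕ) :
    (polyIter A t).comp (X + C q) - C q = polyIter (A.comp (X + C q) - C q) t := by
  induction t with
  | zero =>
    show (X : K[X]).comp (X + C q) - C q = X
    rw [Polynomial.X_comp]
    ring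
  | succ t ih =>
    show ((A.comp (polyIter A t)).comp (X + C q)) - C q = _
    rw [psi_comp, ih]
    rfl


section MainBound
variable [IsAlgClosed K] [DecidableEq K] [CompleteSpace K] [CharZero K]

lemma coeff_lower_bound {p : ℕ} (hp : p.Prime) (hpK : ‖(p : K)‖ = (p : ℝ)⁻¹)
    {f : K[X]} {d : ℕ} (hd : 2 ≤ d) (hdeg : f.natDegree = d)
    (hf : IntC f) (hlead : ‖f.leadingCoeff‖ = 1) {q : K} (hq : ‖q‖ ≤ 1) :
    ∃ C : ℝ, 0 < C ∧ C ≤ 1 ∧ ∀ n, 1 ≤ n →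
      C / n ≤ ‖(taylor q (polyIter f n - X)).coeff
        (rootMultiplicity q (polyIter f n - X))‖ := by
  classical
  set φ : K → K := fun z => f.eval z with hφdef
  have hPeval : ∀ n, (polyIter f n - X).eval q = φ^[n] q - q := by
    intro n
    rw [Polynomial.eval_sub, Polynomial.eval_X, polyIter_eval]
  have hpin : ∀ n, 1 ≤ n → ∀ j, (∀ i, i < j → (taylor q (polyIter f n - X)).coeff i = 0) →
      (taylor q (polyIter f n - X)).coeff j ≠ 0 →
      rootMultiplicity q (polyIter f n - X) = j := by
    intro n hn j hlow hj
    obtain ⟨hc1, hc2⟩ := taylor_coeff_eq (f := f) hd hdeg q hn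
    have hmne : (taylor q (polyIter f n - X)).coeff
        (rootMultiplicity q (polyIter f n - X)) ≠ 0 := by
      rw [hc1]
      exact Polynomial.eval_divByMonic_pow_rootMultiplicity_ne_zero q (Pn_ne_zero hd hdeg hn)
    rcases lt_trichotomy (rootMultiplicity q (polyIter f n - X)) j with h | h | h
    · exact absurd (hlow _ h) hmne
    · exact h
    · exact absurd (hc2 j h) hj
  have hcoeff0 : ∀ n, (taylor q (polyIter f n - X)).coeff 0 = φ^[n] q - q := by
    intro n
    rw [Polynomial.taylor_coeff_zero, hPeval]
  have hnonroot : ∀ n, 1 ≤ n → φ^[n] q ≠ q →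
      rootMultiplicity q (polyIter f n - X) = 0 ∧
      (taylor q (polyIter f n - X)).coeff 0 = φ^[n] q - q := by
    intro n hn hne
    refine ⟨?_, hcoeff0 n⟩
    refine hpin n hn 0 (by omega) ?_
    rw [hcoeff0 n]
    exact sub_ne_zero.mpr hne
  by_cases hper : ∀ n, 1 ≤ n → φ^[n] q ≠ q
  · -- non-periodic case
    obtain ⟨C, hC0, hC1, hC⟩ := np_machine hp hpK hf hq hper
    refine ⟨C, hC0, hC1, ?_⟩
    intro n hn
    obtain ⟨hm0, hc0⟩ := hnonroot n hn (hper n hn)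
    rw [hm0, hc0]
    exact hC n hn
  · -- periodic case
    push_neg at hper
    obtain ⟨n₀, hn₀1, hn₀⟩ := hper
    set S0 : Set ℕ := {n | 1 ≤ n ∧ φ^[n] q = q} with hS0def
    have hS0ne : S0.Nonempty := ⟨n₀, hn₀1, hn₀⟩
    have hS00 : (0:ℕ) ∉ S0 := by
      intro h
      have := h.1
      omega
    have hS0add : ∀ a ∈ S0, ∀ b ∈ S0, a + b ∈ S0 := by
      rintro a ⟨ha1, ha2⟩ b ⟨hb1, hb2⟩
      refine ⟨by omega, ?_⟩
      rw [Function.iterate_add_apply, hb2, ha2]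
    have hS0sub : ∀ a ∈ S0, ∀ b ∈ S0, b < a → a - b ∈ S0 := by
      rintro a ⟨ha1, ha2⟩ b ⟨hb1, hb2⟩ hba
      refine ⟨by omega, ?_⟩
      have h1 : φ^[(a-b) + b] q = q := by
        have h2 : a - b + b = a := by omega
        rw [h2]
        exact ha2
      rw [Function.iterate_add_apply, hb2] at h1
      exact h1
    obtain ⟨k', hk'S, hk'0, hk'iff⟩ := nat_min_dvd hS0ne hS00 hS0add hS0sub
    have hk'fix : φ^[k'] q = q := hk'S.2
    have hk'1 : 1 ≤ k' := hk'S.1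
    have hfixmul : ∀ t, φ^[k'*t] q = q := by
      intro t
      induction t with
      | zero => simp
      | succ t ih =>
        have h1 : k'*(t+1) = k' + k'*t := by ring
        rw [h1, Function.iterate_add_apply, ih, hk'fix]
    have hres : ∀ n, φ^[n] q = φ^[n % k'] q := by
      intro n
      conv_lhs => rw [← Nat.mod_add_div n k']
      rw [Function.iterate_add_apply, hfixmul]
    set c₀ : ℝ := (Finset.range k').inf' (Finset.nonempty_range_iff.mpr (by omega))
        (fun r => if r = 0 then 1 else ‖φ^[r] q - q‖) with hc₀def
    have hc₀pos : 0 < c₀ := by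
      rw [hc₀def, Finset.lt_inf'_iff]
      intro r hr
      by_cases h : r = 0
      · simp [h]
      · simp only [h, if_false]
        refine norm_pos_iff.mpr (sub_ne_zero.mpr ?_)
        intro heq
        have hrS : r ∈ S0 := ⟨by omega, heq⟩
        have h3 := (hk'iff r (by omega)).mp hrS
        have h4 := Nat.le_of_dvd (by omega) h3
        rw [Finset.mem_range] at hr
        omega
    have hc₀le1 : c₀ ≤ 1 := by
      refine le_trans (Finset.inf'_le _ (Finset.mem_range.mpr (by omega : 0 < k'))) ?_
      simp
    have hnonmul : ∀ n, 1 ≤ n → ¬ (k' ∣ n) → c₀ ≤ ‖(taylor q (polyIter f n - X)).coeff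
        (rootMultiplicity q (polyIter f n - X))‖ := by
      intro n hn hnd
      have hr0 : n % k' ≠ 0 := fun h => hnd (Nat.dvd_of_mod_eq_zero h)
      have hrlt : n % k' < k' := Nat.mod_lt n (by omega)
      have hneq : φ^[n] q ≠ q := by
        rw [hres n]
        intro heq
        have h5 : n % k' ∈ S0 := ⟨by omega, heq⟩
        have h6 := (hk'iff _ (by omega)).mp h5
        have h7 := Nat.le_of_dvd (by omega) h6
        omega
      obtain ⟨hm0, hc0⟩ := hnonroot n hn hneq
      rw [hm0, hc0, hres n]
      refine le_trans (Finset.inf'_le _ (Finset.mem_range.mpr hrlt)) ?_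
      simp [hr0]
    set F' : K[X] := polyIter f k' with hF'def
    have hfixF : F'.eval q = q := by
      rw [hF'def, polyIter_eval]
      exact hk'fix
    set lam : K := (derivative F').eval q with hlamdef
    have hlamle : ‖lam‖ ≤ 1 := intC_eval_le (intC_derivative (intC_polyIter hf k')) hq
    have hderiv : ∀ m, (derivative (polyIter f (k'*m))).eval q = lam ^ m := by
      intro m
      rw [polyIter_mul, ← hF'def, multiplier_pow hfixF]
    have hcoeff1 : ∀ m, (taylor q (polyIter f (k'*m) - X)).coeff 1 = lam ^ m - 1 := by
      intro m
      rw [Polynomial.taylor_coeff_one, Polynomial.derivative_sub, Polynomial.derivative_X,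
        Polynomial.eval_sub, Polynomial.eval_one, hderiv]
    have hcoeff0' : ∀ m, (taylor q (polyIter f (k'*m) - X)).coeff 0 = 0 := by
      intro m
      rw [hcoeff0, hfixmul, sub_self]
    have hpin1 : ∀ m, 1 ≤ m → lam ^ m ≠ 1 →
        rootMultiplicity q (polyIter f (k'*m) - X) = 1 ∧
        (taylor q (polyIter f (k'*m) - X)).coeff 1 = lam^m - 1 := by
      intro m hm hlm
      have hkm1 : 1 ≤ k'*m := Nat.mul_pos (by omega) (by omega)
      refine ⟨hpin (k'*m) hkm1 1 ?_ ?_, hcoeff1 m⟩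
      · intro i hi
        have h8 : i = 0 := by omega
        subst h8
        exact hcoeff0' m
      · rw [hcoeff1 m]
        exact sub_ne_zero.mpr hlm
    have hassemble : ∀ C1 : ℝ, 0 < C1 → C1 ≤ 1 →
        (∀ m, 1 ≤ m → C1 / ((k'*m : ℕ) : ℝ) ≤ ‖(taylor q (polyIter f (k'*m) - X)).coeff
            (rootMultiplicity q (polyIter f (k'*m) - X))‖) →
        ∃ C : ℝ, 0 < C ∧ C ≤ 1 ∧ ∀ n, 1 ≤ n →
          C / n ≤ ‖(taylor q (polyIter f n - X)).coeff
            (rootMultiplicity q (polyIter f n - X))‖ := by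
      intro C1 h0 h1 hbound
      refine ⟨min c₀ C1, lt_min hc₀pos h0, le_trans (min_le_left _ _) hc₀le1, ?_⟩
      intro n hn
      by_cases hdvd : k' ∣ n
      · obtain ⟨m, rfl⟩ := hdvd
        have hm1 : 1 ≤ m := by
          rcases Nat.eq_zero_or_pos m with rfl | h
          · omega
          · exact h
        refine le_trans ?_ (hbound m hm1)
        gcongr
        exact min_le_right _ _
      · have h2 := hnonmul n hn hdvd
        refine le_trans ?_ h2
        calc min c₀ C1 / n ≤ min c₀ C1 :=
          div_le_self (le_of_lt (lt_min hc₀pos h0)) (by exact_mod_cast hn)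
        _ ≤ c₀ := min_le_left _ _
    by_cases hroot : ∃ t, 1 ≤ t ∧ lam ^ t = 1
    · -- lam is a root of unity
      have hlamne : lam ≠ 0 := by
        obtain ⟨t, ht1, ht⟩ := hroot
        intro h
        rw [h, zero_pow (by omega)] at ht
        exact zero_ne_one ht
      set W : Set ℕ := {t | 1 ≤ t ∧ lam ^ t = 1} with hWdef
      have hWne : W.Nonempty := hroot
      have hW0 : (0:ℕ) ∉ W := by
        intro h
        have := h.1
        omega
      have hWadd : ∀ a ∈ W, ∀ b ∈ W, a + b ∈ W := by
        rintro a ⟨ha1, ha2⟩ b ⟨hb1, hb2⟩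
        exact ⟨by omega, by rw [pow_add, ha2, hb2, one_mul]⟩
      have hWsub : ∀ a ∈ W, ∀ b ∈ W, b < a → a - b ∈ W := by
        rintro a ⟨ha1, ha2⟩ b ⟨hb1, hb2⟩ hba
        refine ⟨by omega, ?_⟩
        have h1 : lam ^ ((a-b) + b) = 1 := by
          have h2 : a - b + b = a := by omega
          rw [h2]
          exact ha2
        rw [pow_add, hb2, mul_one] at h1
        exact h1
      obtain ⟨w, hwW, hw0, hwiff⟩ := nat_min_dvd hWne hW0 hWadd hWsub
      have hww : lam ^ w = 1 := hwW.2
      -- the parabolic polynomial G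
      set A : K[X] := polyIter f (k'*w) with hAdef
      set G : K[X] := A.comp (X + C q) - C q with hGdef
      have htayA : taylor q A = A.comp (X + C q) := Polynomial.taylor_apply q A
      have hG0 : G.coeff 0 = 0 := by
        rw [hGdef, Polynomial.coeff_sub, ← htayA, Polynomial.taylor_coeff_zero]
        have h1 : A.eval q = q := by
          rw [hAdef, polyIter_eval]
          exact hfixmul w
        rw [h1]
        simp
      have hG1 : G.coeff 1 = 1 := by
        rw [hGdef, Polynomial.coeff_sub, ← htayA, Polynomial.taylor_coeff_one]
        have h1 : (derivative A).eval q = 1 := by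
          rw [hAdef, hderiv w, hww]
        rw [h1]
        simp [Polynomial.coeff_C]
      have hGX : G - X ≠ 0 := by
        intro h
        have hGeq : G = X := by
          have := sub_eq_zero.mp h
          exact this
        have h2 : A.comp (X + C q) = X + C q := by
          rw [hGdef] at hGeq
          have h3 := congrArg (fun z => z + C q) hGeq
          simpa [sub_add_cancel] using h3
        have h4 := congrArg Polynomial.natDegree h2
        rw [Polynomial.natDegree_comp, Polynomial.natDegree_X_add_C] at h4
        rw [hAdef, natDegree_polyIter, hdeg, mul_one] at h4
        have h5 : 2 ≤ d ^ (k'*w) := by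
          calc 2 ≤ d := hd
          _ = d ^ 1 := (pow_one d).symm
          _ ≤ d ^ (k'*w) := Nat.pow_le_pow_right (by omega) (Nat.mul_pos (by omega) (by omega))
        omega
      set ν : ℕ := (G - X).natTrailingDegree with hνdef
      have htc : (G - X).coeff ν ≠ 0 := by
        have h1 : (G - X).trailingCoeff ≠ 0 := fun h => hGX (Polynomial.trailingCoeff_eq_zero.mp h)
        exact h1
      have hν2 : 2 ≤ ν := by
        by_contra h
        push_neg at h
        interval_cases ν
        · apply htc
          rw [Polynomial.coeff_sub, hG0, Polynomial.coeff_X_zero, sub_zero]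
        · apply htc
          rw [Polynomial.coeff_sub, hG1, Polynomial.coeff_X_one, sub_self]
      have hlowG : ∀ i, i < ν → (G - X).coeff i = 0 :=
        fun i hi => Polynomial.coeff_eq_zero_of_lt_natTrailingDegree hi
      have hGint : IntC G := by
        rw [hGdef]
        exact intC_sub (intC_comp (intC_polyIter hf _) (intC_add intC_X (intC_C hq))) (intC_C hq)
      have hGXint : IntC (G - X) := intC_sub hGint intC_X
      have hcle : ‖(G - X).coeff ν‖ ≤ 1 := hGXint ν
      have hcpos : 0 < ‖(G - X).coeff ν‖ := norm_pos_iff.mpr htc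
      -- the key congruence: for w ∣ m, taylor q P_{k' m} = polyIter G t - X
      have hkey : ∀ t, taylor q (polyIter f (k'*w*t) - X) = polyIter G t - X := by
        intro t
        have h1 : polyIter f (k'*w*t) = polyIter A t := by
          rw [hAdef, ← polyIter_mul]
        rw [Polynomial.taylor_apply, Polynomial.sub_comp, h1, Polynomial.X_comp]
        have h2 := psi_polyIter q A t
        rw [← hGdef] at h2
        rw [← h2]
        ring
      -- now the two sub-subcases
      set c₁ : ℝ := (Finset.range w).inf' (Finset.nonempty_range_iff.mpr (by omega))
          (fun r => if lam ^ r = 1 then 1 else ‖lam ^ r - 1‖) with hc₁def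
      have hc₁pos : 0 < c₁ := by
        rw [hc₁def, Finset.lt_inf'_iff]
        intro r hr
        by_cases h : lam ^ r = 1
        · simp [h]
        · simp only [h, if_false]
          exact norm_pos_iff.mpr (sub_ne_zero.mpr h)
      have hc₁le1 : c₁ ≤ 1 := by
        refine le_trans (Finset.inf'_le _ (Finset.mem_range.mpr (by omega : 0 < w))) ?_
        simp
      refine hassemble (min c₁ ‖(G - X).coeff ν‖) (lt_min hc₁pos hcpos)
        (le_trans (min_le_left _ _) hc₁le1) ?_
      intro m hm
      by_cases hwm : w ∣ m
      · -- w ∣ m : parabolic coefficient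
        obtain ⟨t, rfl⟩ := hwm
        have ht1 : 1 ≤ t := by
          rcases Nat.eq_zero_or_pos t with rfl | h
          · omega
          · exact h
        have harith : k' * (w * t) = k'*w*t := by ring
        rw [harith]
        have hcong := iter_congr hν2 hlowG t
        have htay := hkey t
        have hcoeffν : (taylor q (polyIter f (k'*w*t) - X)).coeff ν = (t:K) * (G - X).coeff ν := by
          rw [htay]
          exact hcong ν le_rfl
        have hlowP : ∀ i, i < ν → (taylor q (polyIter f (k'*w*t) - X)).coeff i = 0 := by
          intro i hi
          rw [htay, hcong i hi.le, hlowG i hi, mul_zero]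
        have hνne : (taylor q (polyIter f (k'*w*t) - X)).coeff ν ≠ 0 := by
          rw [hcoeffν]
          refine mul_ne_zero ?_ htc
          exact_mod_cast (Nat.cast_ne_zero (R := K)).mpr (by omega)
        have hkwt1 : 1 ≤ k'*w*t := Nat.mul_pos (Nat.mul_pos (by omega) (by omega)) (by omega)
        have hmν := hpin (k'*w*t) hkwt1 ν hlowP hνne
        rw [hmν, hcoeffν, norm_mul]
        have h9 := natcast_norm_ge hp hpK t ht1
        calc min c₁ ‖(G - X).coeff ν‖ / ((k'*w*t : ℕ) : ℝ)
            ≤ ‖(G - X).coeff ν‖ / ((k'*w*t : ℕ) : ℝ) := by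
              gcongr
              exact min_le_right _ _
        _ ≤ ‖(G - X).coeff ν‖ / (t : ℝ) := by
              refine div_le_div_of_nonneg_left hcpos.le (by exact_mod_cast ht1) ?_
              exact_mod_cast Nat.le_mul_of_pos_left t (Nat.mul_pos (by omega) (by omega))
        _ = ‖(G - X).coeff ν‖ * (1 / (t:ℝ)) := by ring
        _ ≤ ‖(G - X).coeff ν‖ * ‖((t:ℕ) : K)‖ := by
              exact mul_le_mul_of_nonneg_left h9 hcpos.le
        _ = ‖((t:ℕ) : K)‖ * ‖(G - X).coeff ν‖ := by ring
      · -- w ∤ m : simple root, root of unity case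
        have hlm : lam ^ m ≠ 1 := by
          intro h
          exact hwm ((hwiff m (by omega)).mp ⟨by omega, h⟩)
        obtain ⟨hm1eq, hc1eq⟩ := hpin1 m hm hlm
        rw [hm1eq, hc1eq]
        have hr0 : m % w ≠ 0 := fun h => hwm (Nat.dvd_of_mod_eq_zero h)
        have hrlt : m % w < w := Nat.mod_lt m (by omega)
        have hlampow : lam ^ m = lam ^ (m % w) := by
          conv_lhs => rw [← Nat.mod_add_div m w]
          rw [pow_add, pow_mul, hww, one_pow, mul_one]
        have hlmr : lam ^ (m % w) ≠ 1 := by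
          rw [← hlampow]
          exact hlm
        have h10 : c₁ ≤ ‖lam ^ m - 1‖ := by
          rw [hlampow]
          refine le_trans (Finset.inf'_le _ (Finset.mem_range.mpr hrlt)) ?_
          simp [hlmr]
        refine le_trans ?_ h10
        calc min c₁ ‖(G - X).coeff ν‖ / ((k'*m : ℕ) : ℝ) ≤ min c₁ ‖(G - X).coeff ν‖ := by
              refine div_le_self (le_of_lt (lt_min hc₁pos hcpos)) ?_
              have : 1 ≤ k'*m := Nat.mul_pos (by omega) (by omega)
              exact_mod_cast this
        _ ≤ c₁ := min_le_left _ _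
    · -- lam is not a root of unity
      push_neg at hroot
      by_cases hlam1 : ‖lam‖ = 1
      · -- apply the machine to z ↦ lam z at the point 1
        have hintlam : IntC (C lam * X) := intC_mul (intC_C hlam1.le) intC_X
        have hitlam : ∀ t, (fun z => (C lam * X).eval z)^[t] (1:K) = lam ^ t := by
          intro t
          induction t with
          | zero => simp
          | succ t ih =>
            rw [Function.iterate_succ_apply', ih]
            simp [pow_succ]
            ring
        have hperlam : ∀ t, 1 ≤ t → (fun z => (C lam * X).eval z)^[t] (1:K) ≠ 1 := by
          intro t ht
          rw [hitlam]
          exact hroot t ht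
        obtain ⟨Cl, hCl0, hCl1, hCl⟩ := np_machine hp hpK hintlam (by simp) hperlam
        refine hassemble Cl hCl0 hCl1 ?_
        intro m hm
        have hlm : lam ^ m ≠ 1 := hroot m hm
        obtain ⟨hm1eq, hc1eq⟩ := hpin1 m hm hlm
        rw [hm1eq, hc1eq]
        have h1 := hCl m hm
        rw [hitlam] at h1
        refine le_trans ?_ h1
        refine div_le_div_of_nonneg_left hCl0.le (by exact_mod_cast hm) ?_
        exact_mod_cast Nat.le_mul_of_pos_left m (by omega)
      · -- |lam| < 1
        have hlamlt : ‖lam‖ < 1 := lt_of_le_of_ne hlamle hlam1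
        refine hassemble 1 one_pos le_rfl ?_
        intro m hm
        have hlm : lam ^ m ≠ 1 := by
          intro h
          have h2 : ‖lam ^ m‖ = 1 := by rw [h, norm_one]
          rw [norm_pow] at h2
          have h3 : ‖lam‖ ^ m < 1 := pow_lt_one₀ (norm_nonneg _) hlamlt (by omega)
          rw [h2] at h3
          exact lt_irrefl _ h3
        obtain ⟨hm1eq, hc1eq⟩ := hpin1 m hm hlm
        rw [hm1eq, hc1eq]
        have hnorm1 : ‖lam ^ m - 1‖ = 1 := by
          have h1 : ‖lam ^ m - 1 - (-1)‖ < ‖(-1 : K)‖ := by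
            rw [norm_neg, norm_one]
            have h2 : lam ^ m - 1 - (-1) = lam ^ m := by ring
            rw [h2, norm_pow]
            exact pow_lt_one₀ (norm_nonneg _) hlamlt (by omega)
          have h3 := norm_eq_of_sub_lt h1
          rw [h3, norm_neg, norm_one]
        rw [hnorm1]
        have h4 : (0:ℝ) < ((k'*m : ℕ):ℝ) := by
          have : 0 < k'*m := Nat.mul_pos (by omega) (by omega)
          exact_mod_cast this
        rw [div_le_one h4]
        have : 1 ≤ k'*m := Nat.mul_pos (by omega) (by omega)
        exact_mod_cast this

end MainBound
end Stmt0

section FinalTheorem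
open Stmt0

/-- for a polynomial `f` of degree `d ≥ 2` with good reduction over an
algebraically closed complete nonarchimedean field extending `ℚ_p`, the averaged sum of
`log‖ξ - q‖` over the roots `ξ ≠ q` of `f⁽ⁿ⁾ - X` (with multiplicity) converges to
`log⁺‖q‖`. -/
theorem stmt0 {K : Type*} [NormedField K] [IsUltrametricDist K] [CompleteSpace K]
    [IsAlgClosed K] [CharZero K] [DecidableEq K]
    (p : ℕ) (hp : p.Prime) (hpK : ‖(p : K)‖ = (p : ℝ)⁻¹)
    (f : K[X]) (d : ℕ) (hd : 2 ≤ d) (hdeg : f.natDegree = d)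
    (hcoeff : ∀ i, ‖f.coeff i‖ ≤ 1) (hlead : ‖f.leadingCoeff‖ = 1)
    (q : K) :
    Tendsto (fun n : ℕ =>
        (1 / (d : ℝ) ^ n) *
          (((polyIter f n - X).roots.filter (fun ξ => ξ ≠ q)).map
            (fun ξ => Real.log ‖ξ - q‖)).sum)
      atTop (nhds (max 0 (Real.log ‖q‖))) := by
  classical
  have hf : IntC f := hcoeff
  have hd1 : (1:ℝ) < d := by
    have : (2:ℝ) ≤ d := by exact_mod_cast hd
    linarith
  have hd0 : (0:ℝ) < d := by linarith
  by_cases hq1 : ‖q‖ ≤ 1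
  · -- good reduction region: limit is 0
    obtain ⟨C, hC0, hC1, hC⟩ := coeff_lower_bound hp hpK hd hdeg hf hlead hq1
    have hmax : max 0 (Real.log ‖q‖) = 0 := max_eq_left (Real.log_nonpos (norm_nonneg q) hq1)
    rw [hmax]
    have hlowt : Tendsto (fun n : ℕ => -((|Real.log C| * (1/(d:ℝ))^n) + (n:ℝ)/(d:ℝ)^n))
        atTop (nhds 0) := by
      have t1 : Tendsto (fun n : ℕ => (1/(d:ℝ))^n) atTop (nhds 0) := by
        refine tendsto_pow_atTop_nhds_zero_of_lt_one (by positivity) ?_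
        rw [div_lt_one hd0]
        exact hd1
      have t2 : Tendsto (fun n : ℕ => (n:ℝ)/(d:ℝ)^n) atTop (nhds 0) := by
        have h3 := tendsto_pow_const_div_const_pow_of_one_lt 1 hd1
        simpa using h3
      have h4 := ((t1.const_mul (|Real.log C|)).add t2).neg
      simpa using h4
    refine tendsto_of_tendsto_of_tendsto_of_le_of_le' hlowt tendsto_const_nhds ?_ ?_
    · filter_upwards [eventually_ge_atTop 1] with n hn
      have hsum := sum_eq_log_coeff hd hdeg hlead q hn
      rw [hsum]
      set v : ℝ := ‖(Polynomial.taylor q (polyIter f n - X)).coeff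
        (Polynomial.rootMultiplicity q (polyIter f n - X))‖ with hvdef
      have hvlb : C / n ≤ v := hC n hn
      have hn0 : (0:ℝ) < n := by exact_mod_cast hn
      have hvpos : 0 < v := lt_of_lt_of_le (by positivity) hvlb
      have hlog1 : Real.log (C / n) ≤ Real.log v := Real.log_le_log (by positivity) hvlb
      have hlog2 : -(|Real.log C| + n) ≤ Real.log (C / n) := by
        rw [Real.log_div (ne_of_gt hC0) (ne_of_gt hn0)]
        have hlogn : Real.log n ≤ n :=
          le_trans (Real.log_le_sub_one_of_pos hn0) (by linarith)
        have h5 : -(|Real.log C|) ≤ Real.log C := neg_abs_le _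
        linarith
      have hcomb : -(|Real.log C| + n) ≤ Real.log v := le_trans hlog2 hlog1
      have h6 : (1/(d:ℝ)^n) * (-(|Real.log C| + n)) ≤ (1/(d:ℝ)^n) * Real.log v :=
        mul_le_mul_of_nonneg_left hcomb (by positivity)
      refine le_trans (le_of_eq ?_) h6
      rw [one_div_pow]
      field_simp
    · filter_upwards [eventually_ge_atTop 1] with n hn
      rw [sum_eq_log_coeff hd hdeg hlead q hn]
      have hvub : ‖(Polynomial.taylor q (polyIter f n - X)).coeff
          (Polynomial.rootMultiplicity q (polyIter f n - X))‖ ≤ 1 :=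
        (intC_taylor (intC_sub (intC_polyIter hf n) intC_X) hq1) _
      have h7 := Real.log_nonpos (norm_nonneg _) hvub
      have h8 : (0:ℝ) ≤ 1/(d:ℝ)^n := by positivity
      have h9 := mul_le_mul_of_nonneg_left h7 h8
      rw [mul_zero] at h9
      exact h9
  · -- outside the unit ball: limit is log ‖q‖
    push_neg at hq1
    have hmax : max 0 (Real.log ‖q‖) = Real.log ‖q‖ := max_eq_right (Real.log_nonneg hq1.le)
    rw [hmax]
    have heq : ∀ n, 1 ≤ n → (1 / (d : ℝ) ^ n) *
        (((polyIter f n - X).roots.filter (fun ξ => ξ ≠ q)).map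
          (fun ξ => Real.log ‖ξ - q‖)).sum = Real.log ‖q‖ := by
      intro n hn
      have hx := orbit_growth hdeg hd hf hlead hq1 n
      have hdn2 : 2 ≤ d^n := by
        calc 2 ≤ d := hd
        _ = d ^ 1 := (pow_one d).symm
        _ ≤ d ^ n := Nat.pow_le_pow_right (by omega) hn
      have hqlt : ‖q‖ < ‖q‖^(d^n) := by
        conv_lhs => rw [← pow_one ‖q‖]
        exact pow_lt_pow_right₀ hq1 (by omega)
      have hnorm : ‖(fun z => f.eval z)^[n] q - q‖ = ‖q‖^(d^n) := by
        have h1 := norm_eq_of_sub_lt (a := (fun z => f.eval z)^[n] q - q)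
          (b := (fun z => f.eval z)^[n] q) ?_
        · rw [h1, hx]
        · have h2 : (fun z => f.eval z)^[n] q - q - (fun z => f.eval z)^[n] q = -q := by ring
          rw [h2, norm_neg, hx]
          exact hqlt
      have hyne : (polyIter f n - X).eval q ≠ 0 := by
        rw [Polynomial.eval_sub, Polynomial.eval_X, polyIter_eval]
        intro h
        rw [h, norm_zero] at hnorm
        have : (0:ℝ) < ‖q‖^(d^n) := by positivity
        linarith
      have hm0 : Polynomial.rootMultiplicity q (polyIter f n - X) = 0 :=
        Polynomial.rootMultiplicity_eq_zero hyne
      have hc0 : (Polynomial.taylor q (polyIter f n - X)).coeff 0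
          = (polyIter f n - X).eval q := Polynomial.taylor_coeff_zero q _
      rw [sum_eq_log_coeff hd hdeg hlead q hn, hm0, hc0]
      have h3 : ‖(polyIter f n - X).eval q‖ = ‖q‖^(d^n) := by
        rw [Polynomial.eval_sub, Polynomial.eval_X, polyIter_eval]
        exact hnorm
      rw [h3, Real.log_pow]
      have h4 : ((d^n : ℕ):ℝ) = (d:ℝ)^n := by push_cast; ring
      rw [h4]
      have h5 : ((d:ℝ))^n ≠ 0 := by positivity
      field_simp
    have hev : (fun _ : ℕ => Real.log ‖q‖) =ᶠ[atTop] (fun n : ℕ =>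
        (1 / (d : ℝ) ^ n) *
          (((polyIter f n - X).roots.filter (fun ξ => ξ ≠ q)).map
            (fun ξ => Real.log ‖ξ - q‖)).sum) := by
      filter_upwards [eventually_ge_atTop 1] with n hn
      exact (heq n hn).symm
    exact Tendsto.congr' hev tendsto_const_nhds

end FinalTheorem
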